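/- arXiv:2410.21994 — 2 statements merged into one kernel-verified Lean document; each statement's English description precedes it below -/
import Mathlib

section
/- Suppose the smooth functions α̃⁽⁺²⁾, α̃⁽⁻²⁾, F⁽⁺²⁾, F⁽⁻²⁾ on Ω satisfy the inhomogeneous Teukolsky equations 𝔗⁽±²⁾α̃⁽±²⁾ = F⁽±²⁾. Define the Chandrasekhar transformations ψ⁽⁺²⁾ = w⁻¹L̲α̃⁽⁺²⁾, Ψ⁽⁺²⁾ = w⁻¹L̲ψ⁽⁺²⁾, ψ⁽⁻²⁾ = w⁻¹Lα̃⁽⁻²⁾, Ψ⁽⁻²⁾ = w⁻¹Lψ⁽⁻²⁾. Then Ψ⁽⁺²⁾ and Ψ⁽⁻²⁾ satisfy the inhomogeneous Regge–Wheeler equations 𝕽⁽⁺²⁾Ψ⁽⁺²⁾ = L̲(w⁻¹ L̲(w⁻¹F⁽⁺²⁾)) and 𝕽⁽⁻²⁾Ψ⁽⁻²⁾ = L(w⁻¹ L(w⁻¹F⁽⁻²⁾)) on Ω. In particular, if F⁽±²⁾ = 0 then 𝕽⁽±²⁾Ψ⁽±²⁾ = 0. -/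
/- Schwarzschild-Anti-de Sitter background: basic operators on functions
   u(t, r, ϑ, φ) with values in ℂ. -/

noncomputable section

open Filter Topology Set

namespace Grav

abbrev F4 : Type := ℝ → ℝ → ℝ → ℝ → ℂ

/-- `Δ(r) = r² + k²r⁴ − 2Mr`. -/
def Del (M k r : ℝ) : ℝ := r ^ 2 + k ^ 2 * r ^ 4 - 2 * M * r

/-- `∂ₜ`. -/
def dT (u : F4) : F4 := fun t r ϑ φ => deriv (fun s => u s r ϑ φ) t
/-- `∂ᵣ`. -/
def dR (u : F4) : F4 := fun t r ϑ φ => deriv (fun s => u t s ϑ φ) r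
/-- `∂_ϑ`. -/
def dTh (u : F4) : F4 := fun t r ϑ φ => deriv (fun s => u t r s φ) ϑ
/-- `∂_φ`. -/
def dPh (u : F4) : F4 := fun t r ϑ φ => deriv (fun s => u t r ϑ s) φ

/-- `L u = ∂ₜ u + (Δ/r²) ∂ᵣ u`. -/
def opL (M k : ℝ) (u : F4) : F4 := fun t r ϑ φ =>
  dT u t r ϑ φ + ((Del M k r / r ^ 2 : ℝ) : ℂ) * dR u t r ϑ φ

/-- `L̲ u = ∂ₜ u − (Δ/r²) ∂ᵣ u`. -/
def opLb (M k : ℝ) (u : F4) : F4 := fun t r ϑ φ =>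
  dT u t r ϑ φ - ((Del M k r / r ^ 2 : ℝ) : ℂ) * dR u t r ϑ φ

/-- `w = Δ/r⁴`. -/
def ww (M k r : ℝ) : ℝ := Del M k r / r ^ 4
/-- `w′ = w·(6M − 2r)/r²`. -/
def wwP (M k r : ℝ) : ℝ := ww M k r * (6 * M - 2 * r) / r ^ 2

/-- The angular operator `𝓛⁽⁺²⁾`. -/
def angP (u : F4) : F4 := fun t r ϑ φ =>
  -(Real.sin ϑ : ℂ)⁻¹ * deriv (fun x => (Real.sin x : ℂ) * dTh u t r x φ) ϑ
  - (((Real.sin ϑ) ^ 2 : ℝ) : ℂ)⁻¹ * dPh (dPh u) t r ϑ φ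
  - 4 * Complex.I * ((Real.cos ϑ / (Real.sin ϑ) ^ 2 : ℝ) : ℂ) * dPh u t r ϑ φ
  + 4 * (((Real.cos ϑ / Real.sin ϑ) ^ 2 : ℝ) : ℂ) * u t r ϑ φ
  + 4 * u t r ϑ φ

/-- The angular operator `𝓛⁽⁻²⁾`. -/
def angM (u : F4) : F4 := fun t r ϑ φ =>
  -(Real.sin ϑ : ℂ)⁻¹ * deriv (fun x => (Real.sin x : ℂ) * dTh u t r x φ) ϑ
  - (((Real.sin ϑ) ^ 2 : ℝ) : ℂ)⁻¹ * dPh (dPh u) t r ϑ φ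
  + 4 * Complex.I * ((Real.cos ϑ / (Real.sin ϑ) ^ 2 : ℝ) : ℂ) * dPh u t r ϑ φ
  + 4 * (((Real.cos ϑ / Real.sin ϑ) ^ 2 : ℝ) : ℂ) * u t r ϑ φ
  + 4 * u t r ϑ φ

/-- The Teukolsky operator `𝔗⁽⁺²⁾u = −LL̲u + 2(w′/w)L̲u − w(𝓛⁽⁺²⁾ − 2 + 6M/r)u`. -/
def Tp (M k : ℝ) (u : F4) : F4 := fun t r ϑ φ =>
  - opL M k (opLb M k u) t r ϑ φ
  + 2 * ((wwP M k r / ww M k r : ℝ) : ℂ) * opLb M k u t r ϑ φ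
  - ((ww M k r : ℝ) : ℂ) *
      (angP u t r ϑ φ - 2 * u t r ϑ φ + ((6 * M / r : ℝ) : ℂ) * u t r ϑ φ)

/-- The Teukolsky operator `𝔗⁽⁻²⁾u = −LL̲u − 2(w′/w)Lu − w(𝓛⁽⁻²⁾ − 2 + 6M/r)u`. -/
def Tm (M k : ℝ) (u : F4) : F4 := fun t r ϑ φ =>
  - opL M k (opLb M k u) t r ϑ φ
  - 2 * ((wwP M k r / ww M k r : ℝ) : ℂ) * opL M k u t r ϑ φ
  - ((ww M k r : ℝ) : ℂ) *
      (angM u t r ϑ φ - 2 * u t r ϑ φ + ((6 * M / r : ℝ) : ℂ) * u t r ϑ φ)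

/-- The Regge–Wheeler operator `𝕽⁽⁺²⁾u = −LL̲u − w(𝓛⁽⁺²⁾ − 6M/r)u`. -/
def RWp (M k : ℝ) (u : F4) : F4 := fun t r ϑ φ =>
  - opL M k (opLb M k u) t r ϑ φ
  - ((ww M k r : ℝ) : ℂ) * (angP u t r ϑ φ - ((6 * M / r : ℝ) : ℂ) * u t r ϑ φ)

/-- The Regge–Wheeler operator `𝕽⁽⁻²⁾u = −LL̲u − w(𝓛⁽⁻²⁾ − 6M/r)u`. -/
def RWm (M k : ℝ) (u : F4) : F4 := fun t r ϑ φ =>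
  - opL M k (opLb M k u) t r ϑ φ
  - ((ww M k r : ℝ) : ℂ) * (angM u t r ϑ φ - ((6 * M / r : ℝ) : ℂ) * u t r ϑ φ)

/-- The exterior region `Ω = {r > r₊, 0 < ϑ < π}` (as a subset of ℝ⁴). -/
def OmSet (rp : ℝ) : Set (ℝ × ℝ × ℝ × ℝ) :=
  {p | rp < p.2.1 ∧ 0 < p.2.2.1 ∧ p.2.2.1 < Real.pi}

/-- `u` is smooth on `Ω`. -/
def SmoothOnOm (rp : ℝ) (u : F4) : Prop :=
  ContDiffOn ℝ (⊤ : ℕ∞)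
    (fun p : ℝ × ℝ × ℝ × ℝ => u p.1 p.2.1 p.2.2.1 p.2.2.2) (OmSet rp)

/-- Multiplication by `w⁻¹`. -/
def winv (M k : ℝ) (u : F4) : F4 := fun t r ϑ φ => ((ww M k r : ℝ) : ℂ)⁻¹ * u t r ϑ φ
/-- Multiplication by `w`. -/
def wmul (M k : ℝ) (u : F4) : F4 := fun t r ϑ φ => ((ww M k r : ℝ) : ℂ) * u t r ϑ φ
/-- Pointwise complex conjugation. -/
def conjF (u : F4) : F4 := fun t r ϑ φ => (starRingEnd ℂ) (u t r ϑ φ)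

/-- `𝓛⁽⁺²⁾(𝓛⁽⁺²⁾ − 2)`. -/
def angSqP (u : F4) : F4 := angP (fun t r ϑ φ => angP u t r ϑ φ - 2 * u t r ϑ φ)
/-- `𝓛⁽⁻²⁾(𝓛⁽⁻²⁾ − 2)`. -/
def angSqM (u : F4) : F4 := angM (fun t r ϑ φ => angM u t r ϑ φ - 2 * u t r ϑ φ)

/-- `𝓛⁽⁺²⁾(𝓛⁽⁺²⁾ − 2) + 12M∂ₜ`. -/
def TSp (M : ℝ) (u : F4) : F4 := fun t r ϑ φ =>
  angSqP u t r ϑ φ + 12 * (M : ℂ) * dT u t r ϑ φ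
/-- `𝓛⁽⁻²⁾(𝓛⁽⁻²⁾ − 2) − 12M∂ₜ`. -/
def TSm (M : ℝ) (u : F4) : F4 := fun t r ϑ φ =>
  angSqM u t r ϑ φ - 12 * (M : ℂ) * dT u t r ϑ φ

abbrev P4 : Type := ℝ × ℝ × ℝ × ℝ
def UU (u : F4) : P4 → ℂ := fun p => u p.1 p.2.1 p.2.2.1 p.2.2.2

lemma isOpen_OmSet (rp : ℝ) : IsOpen (OmSet rp) := by
  have h1 : IsOpen {p : P4 | rp < p.2.1} :=
    isOpen_lt continuous_const (continuous_fst.comp continuous_snd)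
  have h2 : IsOpen {p : P4 | 0 < p.2.2.1} :=
    isOpen_lt continuous_const ((continuous_fst.comp continuous_snd).comp continuous_snd)
  have h3 : IsOpen {p : P4 | p.2.2.1 < Real.pi} :=
    isOpen_lt ((continuous_fst.comp continuous_snd).comp continuous_snd) continuous_const
  exact h1.inter (h2.inter h3)

variable {rp : ℝ} {u f g : F4} {t r ϑ φ : ℝ}

lemma omem_nhds (hp : ((t,r,ϑ,φ) : P4) ∈ OmSet rp) : OmSet rp ∈ 𝓝 ((t,r,ϑ,φ) : P4) :=
  (isOpen_OmSet rp).mem_nhds hp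

/-- the four coordinate directions -/
def eT : P4 := (1,0,0,0)
def eR : P4 := (0,1,0,0)
def eTh : P4 := (0,0,1,0)
def ePh : P4 := (0,0,0,1)

lemma hasDerivAt_jT : HasDerivAt (fun s : ℝ => ((s,r,ϑ,φ) : P4)) eT t :=
  (hasDerivAt_id t).prodMk (hasDerivAt_const t _)
lemma hasDerivAt_jR : HasDerivAt (fun s : ℝ => ((t,s,ϑ,φ) : P4)) eR r :=
  (hasDerivAt_const r _).prodMk ((hasDerivAt_id r).prodMk (hasDerivAt_const r _))
lemma hasDerivAt_jTh : HasDerivAt (fun s : ℝ => ((t,r,s,φ) : P4)) eTh ϑ :=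
  (hasDerivAt_const ϑ _).prodMk ((hasDerivAt_const ϑ _).prodMk
    ((hasDerivAt_id ϑ).prodMk (hasDerivAt_const ϑ _)))
lemma hasDerivAt_jPh : HasDerivAt (fun s : ℝ => ((t,r,ϑ,s) : P4)) ePh φ :=
  (hasDerivAt_const φ _).prodMk ((hasDerivAt_const φ _).prodMk
    ((hasDerivAt_const φ _).prodMk (hasDerivAt_id φ)))

lemma continuous_jT : Continuous (fun s : ℝ => ((s,r,ϑ,φ) : P4)) := by fun_prop
lemma continuous_jR : Continuous (fun s : ℝ => ((t,s,ϑ,φ) : P4)) := by fun_prop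
lemma continuous_jTh : Continuous (fun s : ℝ => ((t,r,s,φ) : P4)) := by fun_prop
lemma continuous_jPh : Continuous (fun s : ℝ => ((t,r,ϑ,s) : P4)) := by fun_prop

lemma diffAt_of_smooth (hu : SmoothOnOm rp u) (hp : ((t,r,ϑ,φ) : P4) ∈ OmSet rp) :
    DifferentiableAt ℝ (UU u) (t,r,ϑ,φ) :=
  ((hu.contDiffAt (omem_nhds hp)).differentiableAt (by simp))

/-- generic: derivative of a composition with a coordinate curve -/
lemma hasDerivAt_slice {G : P4 → ℂ} {j : ℝ → P4} {e : P4} {x : ℝ}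
    (hG : DifferentiableAt ℝ G (j x)) (hj : HasDerivAt j e x) :
    HasDerivAt (fun s => G (j s)) (fderiv ℝ G (j x) e) x :=
  hG.hasFDerivAt.comp_hasDerivAt x hj

lemma hasDerivAt_T (hu : SmoothOnOm rp u) (hp : ((t,r,ϑ,φ) : P4) ∈ OmSet rp) :
    HasDerivAt (fun s => u s r ϑ φ) (dT u t r ϑ φ) t := by
  have h := hasDerivAt_slice (j := fun s : ℝ => ((s,r,ϑ,φ) : P4))
    (diffAt_of_smooth hu hp) hasDerivAt_jT
  have h2 : dT u t r ϑ φ = fderiv ℝ (UU u) (t,r,ϑ,φ) eT := h.deriv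
  rw [h2]; exact h

lemma hasDerivAt_R (hu : SmoothOnOm rp u) (hp : ((t,r,ϑ,φ) : P4) ∈ OmSet rp) :
    HasDerivAt (fun s => u t s ϑ φ) (dR u t r ϑ φ) r := by
  have h := hasDerivAt_slice (j := fun s : ℝ => ((t,s,ϑ,φ) : P4))
    (diffAt_of_smooth hu hp) hasDerivAt_jR
  have h2 : dR u t r ϑ φ = fderiv ℝ (UU u) (t,r,ϑ,φ) eR := h.deriv
  rw [h2]; exact h

lemma hasDerivAt_Th (hu : SmoothOnOm rp u) (hp : ((t,r,ϑ,φ) : P4) ∈ OmSet rp) :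
    HasDerivAt (fun s => u t r s φ) (dTh u t r ϑ φ) ϑ := by
  have h := hasDerivAt_slice (j := fun s : ℝ => ((t,r,s,φ) : P4))
    (diffAt_of_smooth hu hp) hasDerivAt_jTh
  have h2 : dTh u t r ϑ φ = fderiv ℝ (UU u) (t,r,ϑ,φ) eTh := h.deriv
  rw [h2]; exact h

lemma hasDerivAt_Ph (hu : SmoothOnOm rp u) (hp : ((t,r,ϑ,φ) : P4) ∈ OmSet rp) :
    HasDerivAt (fun s => u t r ϑ s) (dPh u t r ϑ φ) φ := by
  have h := hasDerivAt_slice (j := fun s : ℝ => ((t,r,ϑ,s) : P4))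
    (diffAt_of_smooth hu hp) hasDerivAt_jPh
  have h2 : dPh u t r ϑ φ = fderiv ℝ (UU u) (t,r,ϑ,φ) ePh := h.deriv
  rw [h2]; exact h

lemma dT_eq_pd (hu : SmoothOnOm rp u) (hp : ((t,r,ϑ,φ) : P4) ∈ OmSet rp) :
    dT u t r ϑ φ = fderiv ℝ (UU u) (t,r,ϑ,φ) eT :=
  (hasDerivAt_slice (j := fun s : ℝ => ((s,r,ϑ,φ) : P4))
    (diffAt_of_smooth hu hp) hasDerivAt_jT).deriv
lemma dR_eq_pd (hu : SmoothOnOm rp u) (hp : ((t,r,ϑ,φ) : P4) ∈ OmSet rp) :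
    dR u t r ϑ φ = fderiv ℝ (UU u) (t,r,ϑ,φ) eR :=
  (hasDerivAt_slice (j := fun s : ℝ => ((t,s,ϑ,φ) : P4))
    (diffAt_of_smooth hu hp) hasDerivAt_jR).deriv
lemma dTh_eq_pd (hu : SmoothOnOm rp u) (hp : ((t,r,ϑ,φ) : P4) ∈ OmSet rp) :
    dTh u t r ϑ φ = fderiv ℝ (UU u) (t,r,ϑ,φ) eTh :=
  (hasDerivAt_slice (j := fun s : ℝ => ((t,r,s,φ) : P4))
    (diffAt_of_smooth hu hp) hasDerivAt_jTh).deriv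
lemma dPh_eq_pd (hu : SmoothOnOm rp u) (hp : ((t,r,ϑ,φ) : P4) ∈ OmSet rp) :
    dPh u t r ϑ φ = fderiv ℝ (UU u) (t,r,ϑ,φ) ePh :=
  (hasDerivAt_slice (j := fun s : ℝ => ((t,r,ϑ,s) : P4))
    (diffAt_of_smooth hu hp) hasDerivAt_jPh).deriv

/-- smoothness of `p ↦ fderiv (UU u) p e` on `Ω`. -/
lemma smooth_pd (hu : SmoothOnOm rp u) (e : P4) :
    ContDiffOn ℝ (⊤ : ℕ∞) (fun p => fderiv ℝ (UU u) p e) (OmSet rp) := by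
  have h1 : ContDiffOn ℝ (⊤ : ℕ∞) (fderiv ℝ (UU u)) (OmSet rp) :=
    hu.fderiv_of_isOpen (isOpen_OmSet rp) (by exact_mod_cast le_top)
  exact (ContinuousLinearMap.apply ℝ ℂ e).contDiff.comp_contDiffOn h1

lemma smooth_dT (hu : SmoothOnOm rp u) : SmoothOnOm rp (dT u) := by
  refine (smooth_pd hu eT).congr ?_
  rintro ⟨t,r,ϑ,φ⟩ hp
  exact dT_eq_pd hu hp
lemma smooth_dR (hu : SmoothOnOm rp u) : SmoothOnOm rp (dR u) := by
  refine (smooth_pd hu eR).congr ?_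
  rintro ⟨t,r,ϑ,φ⟩ hp
  exact dR_eq_pd hu hp
lemma smooth_dTh (hu : SmoothOnOm rp u) : SmoothOnOm rp (dTh u) := by
  refine (smooth_pd hu eTh).congr ?_
  rintro ⟨t,r,ϑ,φ⟩ hp
  exact dTh_eq_pd hu hp
lemma smooth_dPh (hu : SmoothOnOm rp u) : SmoothOnOm rp (dPh u) := by
  refine (smooth_pd hu ePh).congr ?_
  rintro ⟨t,r,ϑ,φ⟩ hp
  exact dPh_eq_pd hu hp


/-! ### eventual membership along coordinate slices -/

lemma evT (hp : ((t,r,ϑ,φ) : P4) ∈ OmSet rp) :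
    ∀ᶠ s in 𝓝 t, ((s,r,ϑ,φ) : P4) ∈ OmSet rp :=
  continuous_jT.continuousAt.preimage_mem_nhds (omem_nhds hp)
lemma evR (hp : ((t,r,ϑ,φ) : P4) ∈ OmSet rp) :
    ∀ᶠ s in 𝓝 r, ((t,s,ϑ,φ) : P4) ∈ OmSet rp :=
  continuous_jR.continuousAt.preimage_mem_nhds (omem_nhds hp)
lemma evTh (hp : ((t,r,ϑ,φ) : P4) ∈ OmSet rp) :
    ∀ᶠ s in 𝓝 ϑ, ((t,r,s,φ) : P4) ∈ OmSet rp :=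
  continuous_jTh.continuousAt.preimage_mem_nhds (omem_nhds hp)
lemma evPh (hp : ((t,r,ϑ,φ) : P4) ∈ OmSet rp) :
    ∀ᶠ s in 𝓝 φ, ((t,r,ϑ,s) : P4) ∈ OmSet rp :=
  continuous_jPh.continuousAt.preimage_mem_nhds (omem_nhds hp)

/-- equality on `Ω` -/
def EqOnOm (rp : ℝ) (f g : F4) : Prop :=
  ∀ t r ϑ φ : ℝ, ((t,r,ϑ,φ) : P4) ∈ OmSet rp → f t r ϑ φ = g t r ϑ φ

lemma dT_congr (h : EqOnOm rp f g) (hp : ((t,r,ϑ,φ) : P4) ∈ OmSet rp) :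
    dT f t r ϑ φ = dT g t r ϑ φ := by
  apply Filter.EventuallyEq.deriv_eq
  filter_upwards [evT hp] with s hs
  exact h s r ϑ φ hs
lemma dR_congr (h : EqOnOm rp f g) (hp : ((t,r,ϑ,φ) : P4) ∈ OmSet rp) :
    dR f t r ϑ φ = dR g t r ϑ φ := by
  apply Filter.EventuallyEq.deriv_eq
  filter_upwards [evR hp] with s hs
  exact h t s ϑ φ hs
lemma dTh_congr (h : EqOnOm rp f g) (hp : ((t,r,ϑ,φ) : P4) ∈ OmSet rp) :
    dTh f t r ϑ φ = dTh g t r ϑ φ := by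
  apply Filter.EventuallyEq.deriv_eq
  filter_upwards [evTh hp] with s hs
  exact h t r s φ hs
lemma dPh_congr (h : EqOnOm rp f g) (hp : ((t,r,ϑ,φ) : P4) ∈ OmSet rp) :
    dPh f t r ϑ φ = dPh g t r ϑ φ := by
  apply Filter.EventuallyEq.deriv_eq
  filter_upwards [evPh hp] with s hs
  exact h t r ϑ s hs

/-! ### Clairaut -/

lemma diffAt_fderiv (hu : SmoothOnOm rp u) (hp : ((t,r,ϑ,φ) : P4) ∈ OmSet rp) :
    DifferentiableAt ℝ (fderiv ℝ (UU u)) (t,r,ϑ,φ) :=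
  (((hu.fderiv_of_isOpen (n := ((⊤:ℕ∞) : WithTop ℕ∞)) (m := ((⊤:ℕ∞) : WithTop ℕ∞))
      (isOpen_OmSet rp) (by exact_mod_cast le_top)).contDiffAt
    (omem_nhds hp)).differentiableAt (by simp))

lemma pd_symm (hu : SmoothOnOm rp u) (hp : ((t,r,ϑ,φ) : P4) ∈ OmSet rp) (v w : P4) :
    fderiv ℝ (fderiv ℝ (UU u)) (t,r,ϑ,φ) v w
      = fderiv ℝ (fderiv ℝ (UU u)) (t,r,ϑ,φ) w v := by
  apply second_derivative_symmetric_of_eventually (f := UU u) (f' := fderiv ℝ (UU u))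
  · filter_upwards [omem_nhds hp] with q hq
    have : DifferentiableAt ℝ (UU u) q := by
      obtain ⟨t',r',ϑ',φ'⟩ := q
      exact diffAt_of_smooth hu hq
    exact this.hasFDerivAt
  · exact (diffAt_fderiv hu hp).hasFDerivAt

lemma pd_fderiv (hu : SmoothOnOm rp u) (hp : ((t,r,ϑ,φ) : P4) ∈ OmSet rp) (e d : P4) :
    fderiv ℝ (fun q => fderiv ℝ (UU u) q e) (t,r,ϑ,φ) d
      = fderiv ℝ (fderiv ℝ (UU u)) (t,r,ϑ,φ) d e := by
  have h := (diffAt_fderiv hu hp).hasFDerivAt.clm_apply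
    (hasFDerivAt_const e ((t,r,ϑ,φ) : P4))
  rw [h.fderiv]; simp

lemma dT_of_pd {v : F4} (hu : SmoothOnOm rp u) (e : P4)
    (hveq : ∀ t r ϑ φ : ℝ, ((t,r,ϑ,φ) : P4) ∈ OmSet rp →
      v t r ϑ φ = fderiv ℝ (UU u) (t,r,ϑ,φ) e)
    (hp : ((t,r,ϑ,φ) : P4) ∈ OmSet rp) :
    dT v t r ϑ φ = fderiv ℝ (fderiv ℝ (UU u)) (t,r,ϑ,φ) eT e := by
  have hd : DifferentiableAt ℝ (fun q => fderiv ℝ (UU u) q e) (t,r,ϑ,φ) :=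
    ((smooth_pd hu e).contDiffAt (omem_nhds hp)).differentiableAt (by simp)
  have h2 := hasDerivAt_slice (G := fun q => fderiv ℝ (UU u) q e)
      (j := fun s : ℝ => ((s,r,ϑ,φ) : P4)) hd hasDerivAt_jT
  have h3 : dT v t r ϑ φ = deriv (fun s => fderiv ℝ (UU u) ((s,r,ϑ,φ) : P4) e) t := by
    apply Filter.EventuallyEq.deriv_eq
    filter_upwards [evT hp] with s hs
    exact hveq s r ϑ φ hs
  rw [h3, h2.deriv, pd_fderiv hu hp]
lemma dR_of_pd {v : F4} (hu : SmoothOnOm rp u) (e : P4)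
    (hveq : ∀ t r ϑ φ : ℝ, ((t,r,ϑ,φ) : P4) ∈ OmSet rp →
      v t r ϑ φ = fderiv ℝ (UU u) (t,r,ϑ,φ) e)
    (hp : ((t,r,ϑ,φ) : P4) ∈ OmSet rp) :
    dR v t r ϑ φ = fderiv ℝ (fderiv ℝ (UU u)) (t,r,ϑ,φ) eR e := by
  have hd : DifferentiableAt ℝ (fun q => fderiv ℝ (UU u) q e) (t,r,ϑ,φ) :=
    ((smooth_pd hu e).contDiffAt (omem_nhds hp)).differentiableAt (by simp)
  have h2 := hasDerivAt_slice (G := fun q => fderiv ℝ (UU u) q e)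
      (j := fun s : ℝ => ((t,s,ϑ,φ) : P4)) hd hasDerivAt_jR
  have h3 : dR v t r ϑ φ = deriv (fun s => fderiv ℝ (UU u) ((t,s,ϑ,φ) : P4) e) r := by
    apply Filter.EventuallyEq.deriv_eq
    filter_upwards [evR hp] with s hs
    exact hveq t s ϑ φ hs
  rw [h3, h2.deriv, pd_fderiv hu hp]
lemma dTh_of_pd {v : F4} (hu : SmoothOnOm rp u) (e : P4)
    (hveq : ∀ t r ϑ φ : ℝ, ((t,r,ϑ,φ) : P4) ∈ OmSet rp →
      v t r ϑ φ = fderiv ℝ (UU u) (t,r,ϑ,φ) e)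
    (hp : ((t,r,ϑ,φ) : P4) ∈ OmSet rp) :
    dTh v t r ϑ φ = fderiv ℝ (fderiv ℝ (UU u)) (t,r,ϑ,φ) eTh e := by
  have hd : DifferentiableAt ℝ (fun q => fderiv ℝ (UU u) q e) (t,r,ϑ,φ) :=
    ((smooth_pd hu e).contDiffAt (omem_nhds hp)).differentiableAt (by simp)
  have h2 := hasDerivAt_slice (G := fun q => fderiv ℝ (UU u) q e)
      (j := fun s : ℝ => ((t,r,s,φ) : P4)) hd hasDerivAt_jTh
  have h3 : dTh v t r ϑ φ = deriv (fun s => fderiv ℝ (UU u) ((t,r,s,φ) : P4) e) ϑ := by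
    apply Filter.EventuallyEq.deriv_eq
    filter_upwards [evTh hp] with s hs
    exact hveq t r s φ hs
  rw [h3, h2.deriv, pd_fderiv hu hp]
lemma dPh_of_pd {v : F4} (hu : SmoothOnOm rp u) (e : P4)
    (hveq : ∀ t r ϑ φ : ℝ, ((t,r,ϑ,φ) : P4) ∈ OmSet rp →
      v t r ϑ φ = fderiv ℝ (UU u) (t,r,ϑ,φ) e)
    (hp : ((t,r,ϑ,φ) : P4) ∈ OmSet rp) :
    dPh v t r ϑ φ = fderiv ℝ (fderiv ℝ (UU u)) (t,r,ϑ,φ) ePh e := by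
  have hd : DifferentiableAt ℝ (fun q => fderiv ℝ (UU u) q e) (t,r,ϑ,φ) :=
    ((smooth_pd hu e).contDiffAt (omem_nhds hp)).differentiableAt (by simp)
  have h2 := hasDerivAt_slice (G := fun q => fderiv ℝ (UU u) q e)
      (j := fun s : ℝ => ((t,r,ϑ,s) : P4)) hd hasDerivAt_jPh
  have h3 : dPh v t r ϑ φ = deriv (fun s => fderiv ℝ (UU u) ((t,r,ϑ,s) : P4) e) φ := by
    apply Filter.EventuallyEq.deriv_eq
    filter_upwards [evPh hp] with s hs
    exact hveq t r ϑ s hs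
  rw [h3, h2.deriv, pd_fderiv hu hp]

lemma dT_dR_comm (hu : SmoothOnOm rp u) (hp : ((t,r,ϑ,φ) : P4) ∈ OmSet rp) :
    dT (dR u) t r ϑ φ = dR (dT u) t r ϑ φ := by
  rw [dT_of_pd hu eR (fun t r ϑ φ hq => dR_eq_pd hu hq) hp,
      dR_of_pd hu eT (fun t r ϑ φ hq => dT_eq_pd hu hq) hp, pd_symm hu hp]
lemma dT_dTh_comm (hu : SmoothOnOm rp u) (hp : ((t,r,ϑ,φ) : P4) ∈ OmSet rp) :
    dT (dTh u) t r ϑ φ = dTh (dT u) t r ϑ φ := by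
  rw [dT_of_pd hu eTh (fun t r ϑ φ hq => dTh_eq_pd hu hq) hp,
      dTh_of_pd hu eT (fun t r ϑ φ hq => dT_eq_pd hu hq) hp, pd_symm hu hp]
lemma dT_dPh_comm (hu : SmoothOnOm rp u) (hp : ((t,r,ϑ,φ) : P4) ∈ OmSet rp) :
    dT (dPh u) t r ϑ φ = dPh (dT u) t r ϑ φ := by
  rw [dT_of_pd hu ePh (fun t r ϑ φ hq => dPh_eq_pd hu hq) hp,
      dPh_of_pd hu eT (fun t r ϑ φ hq => dT_eq_pd hu hq) hp, pd_symm hu hp]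
lemma dR_dTh_comm (hu : SmoothOnOm rp u) (hp : ((t,r,ϑ,φ) : P4) ∈ OmSet rp) :
    dR (dTh u) t r ϑ φ = dTh (dR u) t r ϑ φ := by
  rw [dR_of_pd hu eTh (fun t r ϑ φ hq => dTh_eq_pd hu hq) hp,
      dTh_of_pd hu eR (fun t r ϑ φ hq => dR_eq_pd hu hq) hp, pd_symm hu hp]
lemma dR_dPh_comm (hu : SmoothOnOm rp u) (hp : ((t,r,ϑ,φ) : P4) ∈ OmSet rp) :
    dR (dPh u) t r ϑ φ = dPh (dR u) t r ϑ φ := by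
  rw [dR_of_pd hu ePh (fun t r ϑ φ hq => dPh_eq_pd hu hq) hp,
      dPh_of_pd hu eR (fun t r ϑ φ hq => dR_eq_pd hu hq) hp, pd_symm hu hp]


/-! ### positivity and nonvanishing -/

variable {M k : ℝ}

lemma Del_pos (hM : 0 < M) (hk : 0 < k) (hrp : 0 < rp)
    (hroot : rp + k ^ 2 * rp ^ 3 - 2 * M = 0) (hr : rp < r) : 0 < Del M k r := by
  have hr0 : 0 < r := lt_trans hrp hr
  have h2M : 2 * M = rp + k ^ 2 * rp ^ 3 := by linarith
  have hcube : rp ^ 3 < r ^ 3 := by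
    have := pow_lt_pow_left₀ hr hrp.le (n := 3) (by norm_num)
    exact this
  have hk2 : k ^ 2 * rp ^ 3 < k ^ 2 * r ^ 3 := by
    have := mul_lt_mul_of_pos_left hcube (pow_pos hk 2)
    linarith
  have : 0 < r + k ^ 2 * r ^ 3 - 2 * M := by linarith
  have : Del M k r = r * (r + k ^ 2 * r ^ 3 - 2 * M) := by unfold Del; ring
  nlinarith

lemma ww_pos (hM : 0 < M) (hk : 0 < k) (hrp : 0 < rp)
    (hroot : rp + k ^ 2 * rp ^ 3 - 2 * M = 0) (hr : rp < r) : 0 < ww M k r := by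
  have hr0 : 0 < r := lt_trans hrp hr
  exact div_pos (Del_pos hM hk hrp hroot hr) (by positivity)

/-! ### coefficient functions and their derivatives -/

/-- the coefficient `Δ/r²` (as appearing in `opL`). -/
def aF (M k : ℝ) : ℝ → ℂ := fun s => ((Del M k s / s ^ 2 : ℝ) : ℂ)
/-- `w` as a complex-valued radial function. -/
def wF (M k : ℝ) : ℝ → ℂ := fun s => ((ww M k s : ℝ) : ℂ)
/-- `w′/w` as appearing in the Teukolsky operators. -/
def cF (M k : ℝ) : ℝ → ℂ := fun s => ((wwP M k s / ww M k s : ℝ) : ℂ)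
/-- `6M/r`. -/
def mF (M : ℝ) : ℝ → ℂ := fun s => ((6 * M / s : ℝ) : ℂ)

lemma hasDerivAt_Del : HasDerivAt (fun s : ℝ => Del M k s)
    (2 * r + k ^ 2 * (4 * r ^ 3) - 2 * M) r := by
  have h1 : HasDerivAt (fun s : ℝ => s ^ 2) (2 * r) r := by simpa using hasDerivAt_pow 2 r
  have h2 : HasDerivAt (fun s : ℝ => k ^ 2 * s ^ 4) (k ^ 2 * (4 * r ^ 3)) r := by
    simpa using (hasDerivAt_pow 4 r).const_mul (k ^ 2)
  have h3 : HasDerivAt (fun s : ℝ => 2 * M * s) (2 * M) r := by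
    simpa using (hasDerivAt_id r).const_mul (2 * M)
  simpa [Del] using (h1.fun_add h2).fun_sub h3

lemma hasDerivAt_aF (hr : r ≠ 0) :
    HasDerivAt (aF M k) ((2 * k ^ 2 * r + 2 * M / r ^ 2 : ℝ) : ℂ) r := by
  have h1 : HasDerivAt (fun s : ℝ => Del M k s / s ^ 2)
      (2 * k ^ 2 * r + 2 * M / r ^ 2) r := by
    have h2 : HasDerivAt (fun s : ℝ => s ^ 2) (2 * r) r := by simpa using hasDerivAt_pow 2 r
    have h := (hasDerivAt_Del (M := M) (k := k)).fun_div h2 (pow_ne_zero 2 hr)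
    refine h.congr_deriv ?_
    field_simp [Del]
    unfold Del; ring
  exact h1.ofReal_comp

lemma hasDerivAt_wF (hr : r ≠ 0) :
    HasDerivAt (wF M k) ((((6 * M - 2 * r) / r ^ 4 : ℝ)) : ℂ) r := by
  have h1 : HasDerivAt (fun s : ℝ => ww M k s) ((6 * M - 2 * r) / r ^ 4) r := by
    have h2 : HasDerivAt (fun s : ℝ => s ^ 4) (4 * r ^ 3) r := by
      simpa using hasDerivAt_pow 4 r
    have h := (hasDerivAt_Del (M := M) (k := k)).fun_div h2 (pow_ne_zero 4 hr)
    have hww : (fun s : ℝ => ww M k s) = fun s : ℝ => Del M k s / s ^ 4 := rfl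
    rw [hww]
    refine h.congr_deriv ?_
    field_simp [Del]
    unfold Del; ring
  exact h1.ofReal_comp

lemma hasDerivAt_mF (hr : r ≠ 0) :
    HasDerivAt (mF M) (((-(6 * M) / r ^ 2 : ℝ)) : ℂ) r := by
  have h1 : HasDerivAt (fun s : ℝ => 6 * M / s) (-(6 * M) / r ^ 2) r := by
    have h := (hasDerivAt_const r (6 * M)).fun_div (hasDerivAt_id r) hr
    refine h.congr_deriv ?_
    field_simp
    simp only [id]
    field_simp
    ring
  exact h1.ofReal_comp

lemma cF_eventually_eq (hM : 0 < M) (hk : 0 < k) (hrp : 0 < rp)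
    (hroot : rp + k ^ 2 * rp ^ 3 - 2 * M = 0) (hr : rp < r) :
    ∀ᶠ s in 𝓝 r, cF M k s = (((6 * M - 2 * s) / s ^ 2 : ℝ) : ℂ) := by
  filter_upwards [eventually_gt_nhds hr] with s hs
  have hs0 : (0:ℝ) < s := lt_trans hrp hs
  have hww : ww M k s ≠ 0 := ne_of_gt (ww_pos hM hk hrp hroot hs)
  have : wwP M k s / ww M k s = (6 * M - 2 * s) / s ^ 2 := by
    unfold wwP
    field_simp
  rw [cF, this]

lemma hasDerivAt_cF (hM : 0 < M) (hk : 0 < k) (hrp : 0 < rp)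
    (hroot : rp + k ^ 2 * rp ^ 3 - 2 * M = 0) (hr : rp < r) :
    HasDerivAt (cF M k) ((((2 * r - 12 * M) / r ^ 3 : ℝ)) : ℂ) r := by
  have hr0 : r ≠ 0 := ne_of_gt (lt_trans hrp hr)
  have h1 : HasDerivAt (fun s : ℝ => (6 * M - 2 * s) / s ^ 2) ((2 * r - 12 * M) / r ^ 3) r := by
    have h2 : HasDerivAt (fun s : ℝ => s ^ 2) (2 * r) r := by simpa using hasDerivAt_pow 2 r
    have h3 : HasDerivAt (fun s : ℝ => 6 * M - 2 * s) (-2) r := by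
      simpa using (hasDerivAt_const r (6*M)).fun_sub ((hasDerivAt_id r).const_mul 2)
    have h := h3.fun_div h2 (pow_ne_zero 2 hr0)
    refine h.congr_deriv ?_
    field_simp
    ring
  have h4 : HasDerivAt (fun s : ℝ => (((6 * M - 2 * s) / s ^ 2 : ℝ) : ℂ))
      ((((2 * r - 12 * M) / r ^ 3 : ℝ)) : ℂ) r := h1.ofReal_comp
  exact h4.congr_of_eventuallyEq ((cF_eventually_eq hM hk hrp hroot hr).mono fun s hs => hs)

/-! ### smoothness of radial coefficients on Ω -/

lemma contDiffOn_coef {c : ℝ → ℝ} (hc : ∀ x : ℝ, rp < x → ContDiffAt ℝ (⊤:ℕ∞) c x) :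
    ContDiffOn ℝ (⊤:ℕ∞) (fun p : P4 => ((c p.2.1 : ℝ) : ℂ)) (OmSet rp) := by
  intro p hp
  apply ContDiffWithinAt.mono_of_mem_nhdsWithin ?_ (self_mem_nhdsWithin)
  have h1 : ContDiffAt ℝ (⊤:ℕ∞) (fun p : P4 => ((c p.2.1 : ℝ) : ℂ)) p := by
    have h2 : ContDiffAt ℝ (⊤:ℕ∞) c p.2.1 := hc _ hp.1
    have h3 : ContDiffAt ℝ (⊤:ℕ∞) (fun p : P4 => p.2.1) p :=
      (contDiff_fst.comp contDiff_snd).contDiffAt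
    exact ContDiffAt.comp p (Complex.ofRealCLM.contDiff.contDiffAt) (ContDiffAt.comp p h2 h3)
  exact h1.contDiffWithinAt


/-! ### smoothness of coefficient fields -/

lemma contDiffOn_coefRC {c : ℝ → ℂ} (hc : ∀ x : ℝ, rp < x → ContDiffAt ℝ (⊤:ℕ∞) c x) :
    ContDiffOn ℝ (⊤:ℕ∞) (fun p : P4 => c p.2.1) (OmSet rp) := by
  intro p hp
  apply ContDiffWithinAt.mono_of_mem_nhdsWithin ?_ (self_mem_nhdsWithin)
  have h3 : ContDiffAt ℝ (⊤:ℕ∞) (fun p : P4 => p.2.1) p :=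
    (contDiff_fst.comp contDiff_snd).contDiffAt
  exact (ContDiffAt.comp p (hc _ hp.1) h3).contDiffWithinAt

lemma contDiffOn_coefThC {c : ℝ → ℂ} (hc : ∀ x : ℝ, 0 < x → x < Real.pi →
    ContDiffAt ℝ (⊤:ℕ∞) c x) :
    ContDiffOn ℝ (⊤:ℕ∞) (fun p : P4 => c p.2.2.1) (OmSet rp) := by
  intro p hp
  apply ContDiffWithinAt.mono_of_mem_nhdsWithin ?_ (self_mem_nhdsWithin)
  have h3 : ContDiffAt ℝ (⊤:ℕ∞) (fun p : P4 => p.2.2.1) p :=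
    ((contDiff_fst.comp contDiff_snd).comp contDiff_snd).contDiffAt
  exact (ContDiffAt.comp p (hc _ hp.2.1 hp.2.2) h3).contDiffWithinAt

lemma contDiff_DelC : ContDiff ℝ (⊤:ℕ∞) (fun x : ℝ => Del M k x) := by
  unfold Del; fun_prop

lemma contDiffAt_ofReal {c : ℝ → ℝ} {x : ℝ} (hc : ContDiffAt ℝ (⊤:ℕ∞) c x) :
    ContDiffAt ℝ (⊤:ℕ∞) (fun y => ((c y : ℝ) : ℂ)) x :=
  Complex.ofRealCLM.contDiff.contDiffAt.comp x hc

lemma smooth_coef_aF (hrp : 0 < rp) :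
    ContDiffOn ℝ (⊤:ℕ∞) (fun p : P4 => ((Del M k p.2.1 / p.2.1 ^ 2 : ℝ) : ℂ)) (OmSet rp) := by
  apply contDiffOn_coefRC (c := fun x => ((Del M k x / x ^ 2 : ℝ) : ℂ))
  intro x hx
  have hx0 : x ≠ 0 := ne_of_gt (lt_trans hrp hx)
  exact contDiffAt_ofReal (contDiff_DelC.contDiffAt.div ((contDiff_id.pow 2).contDiffAt)
    (pow_ne_zero 2 hx0))

lemma smooth_coef_wF (hrp : 0 < rp) :
    ContDiffOn ℝ (⊤:ℕ∞) (fun p : P4 => ((ww M k p.2.1 : ℝ) : ℂ)) (OmSet rp) := by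
  apply contDiffOn_coefRC (c := fun x => ((ww M k x : ℝ) : ℂ))
  intro x hx
  have hx0 : x ≠ 0 := ne_of_gt (lt_trans hrp hx)
  exact contDiffAt_ofReal (contDiff_DelC.contDiffAt.div ((contDiff_id.pow 4).contDiffAt)
    (pow_ne_zero 4 hx0))

lemma smooth_coef_wFinv (hM : 0 < M) (hk : 0 < k) (hrp : 0 < rp)
    (hroot : rp + k ^ 2 * rp ^ 3 - 2 * M = 0) :
    ContDiffOn ℝ (⊤:ℕ∞) (fun p : P4 => (((ww M k p.2.1 : ℝ) : ℂ))⁻¹) (OmSet rp) := by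
  apply contDiffOn_coefRC (c := fun x => (((ww M k x : ℝ) : ℂ))⁻¹)
  intro x hx
  have hx0 : x ≠ 0 := ne_of_gt (lt_trans hrp hx)
  have hne : ((ww M k x : ℝ) : ℂ) ≠ 0 := by
    exact_mod_cast Complex.ofReal_ne_zero.mpr (ne_of_gt (ww_pos hM hk hrp hroot hx))
  exact (contDiffAt_ofReal (contDiff_DelC.contDiffAt.div ((contDiff_id.pow 4).contDiffAt)
    (pow_ne_zero 4 hx0))).inv hne

/-! ### smoothness closure under the operators -/

lemma smooth_opL (hrp : 0 < rp) (hu : SmoothOnOm rp u) : SmoothOnOm rp (opL M k u) :=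
  (smooth_dT hu).add ((smooth_coef_aF hrp).mul (smooth_dR hu))

lemma smooth_opLb (hrp : 0 < rp) (hu : SmoothOnOm rp u) : SmoothOnOm rp (opLb M k u) :=
  (smooth_dT hu).sub ((smooth_coef_aF hrp).mul (smooth_dR hu))

lemma smooth_winv (hM : 0 < M) (hk : 0 < k) (hrp : 0 < rp)
    (hroot : rp + k ^ 2 * rp ^ 3 - 2 * M = 0) (hu : SmoothOnOm rp u) :
    SmoothOnOm rp (winv M k u) :=
  (smooth_coef_wFinv hM hk hrp hroot).mul hu

lemma smooth_wmul (hrp : 0 < rp) (hu : SmoothOnOm rp u) : SmoothOnOm rp (wmul M k u) :=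
  (smooth_coef_wF hrp).mul hu

lemma sin_ne_zero_of (h1 : 0 < ϑ) (h2 : ϑ < Real.pi) : Real.sin ϑ ≠ 0 :=
  ne_of_gt (Real.sin_pos_of_pos_of_lt_pi h1 h2)

/-- `(t,r,ϑ,φ) ↦ sin ϑ · ∂_ϑ u` -/
def SS (u : F4) : F4 := fun t r ϑ φ => (Real.sin ϑ : ℂ) * dTh u t r ϑ φ

lemma smooth_SS (hu : SmoothOnOm rp u) : SmoothOnOm rp (SS u) := by
  refine ContDiffOn.mul ?_ (smooth_dTh hu)
  exact contDiffOn_coefThC (fun x _ _ => contDiffAt_ofReal Real.contDiff_sin.contDiffAt)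

lemma angP_eq_SS (u : F4) : angP u = fun t r ϑ φ =>
    -(Real.sin ϑ : ℂ)⁻¹ * dTh (SS u) t r ϑ φ
    - (((Real.sin ϑ) ^ 2 : ℝ) : ℂ)⁻¹ * dPh (dPh u) t r ϑ φ
    - 4 * Complex.I * ((Real.cos ϑ / (Real.sin ϑ) ^ 2 : ℝ) : ℂ) * dPh u t r ϑ φ
    + 4 * (((Real.cos ϑ / Real.sin ϑ) ^ 2 : ℝ) : ℂ) * u t r ϑ φ
    + 4 * u t r ϑ φ := rfl

lemma angM_eq_SS (u : F4) : angM u = fun t r ϑ φ =>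
    -(Real.sin ϑ : ℂ)⁻¹ * dTh (SS u) t r ϑ φ
    - (((Real.sin ϑ) ^ 2 : ℝ) : ℂ)⁻¹ * dPh (dPh u) t r ϑ φ
    + 4 * Complex.I * ((Real.cos ϑ / (Real.sin ϑ) ^ 2 : ℝ) : ℂ) * dPh u t r ϑ φ
    + 4 * (((Real.cos ϑ / Real.sin ϑ) ^ 2 : ℝ) : ℂ) * u t r ϑ φ
    + 4 * u t r ϑ φ := rfl

lemma smooth_coef_sininv :
    ContDiffOn ℝ (⊤:ℕ∞) (fun p : P4 => (-(Real.sin p.2.2.1 : ℂ)⁻¹)) (OmSet rp) := by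
  apply ContDiffOn.neg
  apply contDiffOn_coefThC (c := fun x => ((Real.sin x : ℂ))⁻¹)
  intro x h1 h2
  have : (Real.sin x : ℂ) ≠ 0 := by
    exact_mod_cast Complex.ofReal_ne_zero.mpr (sin_ne_zero_of h1 h2)
  exact (contDiffAt_ofReal Real.contDiff_sin.contDiffAt).inv this

lemma smooth_coef_sinsqinv :
    ContDiffOn ℝ (⊤:ℕ∞) (fun p : P4 => ((((Real.sin p.2.2.1) ^ 2 : ℝ) : ℂ))⁻¹) (OmSet rp) := by
  apply contDiffOn_coefThC (c := fun x => ((((Real.sin x) ^ 2 : ℝ) : ℂ))⁻¹)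
  intro x h1 h2
  have : ((((Real.sin x) ^ 2 : ℝ)) : ℂ) ≠ 0 := by
    exact_mod_cast Complex.ofReal_ne_zero.mpr (pow_ne_zero 2 (sin_ne_zero_of h1 h2))
  exact (contDiffAt_ofReal ((Real.contDiff_sin.pow 2).contDiffAt)).inv this

lemma smooth_coef_cossin2 :
    ContDiffOn ℝ (⊤:ℕ∞)
      (fun p : P4 => ((Real.cos p.2.2.1 / (Real.sin p.2.2.1) ^ 2 : ℝ) : ℂ)) (OmSet rp) := by
  apply contDiffOn_coefThC (c := fun x => ((Real.cos x / (Real.sin x) ^ 2 : ℝ) : ℂ))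
  intro x h1 h2
  exact contDiffAt_ofReal (Real.contDiff_cos.contDiffAt.div
    ((Real.contDiff_sin.pow 2).contDiffAt) (pow_ne_zero 2 (sin_ne_zero_of h1 h2)))

lemma smooth_coef_cot2 :
    ContDiffOn ℝ (⊤:ℕ∞)
      (fun p : P4 => (((Real.cos p.2.2.1 / Real.sin p.2.2.1) ^ 2 : ℝ) : ℂ)) (OmSet rp) := by
  apply contDiffOn_coefThC (c := fun x => (((Real.cos x / Real.sin x) ^ 2 : ℝ) : ℂ))
  intro x h1 h2
  exact contDiffAt_ofReal ((Real.contDiff_cos.contDiffAt.div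
    (Real.contDiff_sin.contDiffAt) (sin_ne_zero_of h1 h2)).pow 2)

lemma smooth_angP (hu : SmoothOnOm rp u) : SmoothOnOm rp (angP u) := by
  rw [angP_eq_SS]
  refine ContDiffOn.add (ContDiffOn.add (ContDiffOn.sub (ContDiffOn.sub
    (smooth_coef_sininv.mul (smooth_dTh (smooth_SS hu)))
    (smooth_coef_sinsqinv.mul (smooth_dPh (smooth_dPh hu)))) ?_) ?_) ?_
  · exact (contDiffOn_const.mul smooth_coef_cossin2).mul (smooth_dPh hu)
  · exact (contDiffOn_const.mul smooth_coef_cot2).mul hu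
  · exact contDiffOn_const.mul hu

lemma smooth_angM (hu : SmoothOnOm rp u) : SmoothOnOm rp (angM u) := by
  rw [angM_eq_SS]
  refine ContDiffOn.add (ContDiffOn.add (ContDiffOn.add (ContDiffOn.sub
    (smooth_coef_sininv.mul (smooth_dTh (smooth_SS hu)))
    (smooth_coef_sinsqinv.mul (smooth_dPh (smooth_dPh hu)))) ?_) ?_) ?_
  · exact (contDiffOn_const.mul smooth_coef_cossin2).mul (smooth_dPh hu)
  · exact (contDiffOn_const.mul smooth_coef_cot2).mul hu
  · exact contDiffOn_const.mul hu


/-! ### pointwise congruence for the operators -/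

lemma opL_congr (h : EqOnOm rp f g) (hp : ((t,r,ϑ,φ) : P4) ∈ OmSet rp) :
    opL M k f t r ϑ φ = opL M k g t r ϑ φ := by
  unfold opL; rw [dT_congr h hp, dR_congr h hp]
lemma opLb_congr (h : EqOnOm rp f g) (hp : ((t,r,ϑ,φ) : P4) ∈ OmSet rp) :
    opLb M k f t r ϑ φ = opLb M k g t r ϑ φ := by
  unfold opLb; rw [dT_congr h hp, dR_congr h hp]

/-! ### product rules for `opL`, `opLb` with radial coefficients -/

lemma opL_cmul {c : ℝ → ℂ} {cd : ℂ} (hc : HasDerivAt c cd r)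
    (hu : SmoothOnOm rp u) (hp : ((t,r,ϑ,φ) : P4) ∈ OmSet rp) :
    opL M k (fun t r ϑ φ => c r * u t r ϑ φ) t r ϑ φ
      = c r * opL M k u t r ϑ φ + ((Del M k r / r ^ 2 : ℝ) : ℂ) * cd * u t r ϑ φ := by
  have hT : dT (fun t r ϑ φ => c r * u t r ϑ φ) t r ϑ φ = c r * dT u t r ϑ φ :=
    ((hasDerivAt_T hu hp).const_mul (c r)).deriv
  have hR : dR (fun t r ϑ φ => c r * u t r ϑ φ) t r ϑ φ
      = cd * u t r ϑ φ + c r * dR u t r ϑ φ := (hc.mul (hasDerivAt_R hu hp)).deriv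
  unfold opL; rw [hT, hR]; ring

lemma opLb_cmul {c : ℝ → ℂ} {cd : ℂ} (hc : HasDerivAt c cd r)
    (hu : SmoothOnOm rp u) (hp : ((t,r,ϑ,φ) : P4) ∈ OmSet rp) :
    opLb M k (fun t r ϑ φ => c r * u t r ϑ φ) t r ϑ φ
      = c r * opLb M k u t r ϑ φ - ((Del M k r / r ^ 2 : ℝ) : ℂ) * cd * u t r ϑ φ := by
  have hT : dT (fun t r ϑ φ => c r * u t r ϑ φ) t r ϑ φ = c r * dT u t r ϑ φ :=
    ((hasDerivAt_T hu hp).const_mul (c r)).deriv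
  have hR : dR (fun t r ϑ φ => c r * u t r ϑ φ) t r ϑ φ
      = cd * u t r ϑ φ + c r * dR u t r ϑ φ := (hc.mul (hasDerivAt_R hu hp)).deriv
  unfold opLb; rw [hT, hR]; ring

/-! ### `[L, L̲] = 0` -/

lemma opL_opLb_comm (hrp : 0 < rp) (hu : SmoothOnOm rp u)
    (hp : ((t,r,ϑ,φ) : P4) ∈ OmSet rp) :
    opL M k (opLb M k u) t r ϑ φ = opLb M k (opL M k u) t r ϑ φ := by
  have hr0 : r ≠ 0 := ne_of_gt (lt_trans hrp hp.1)
  have haF := hasDerivAt_aF (M := M) (k := k) hr0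
  have hT1 : dT (opLb M k u) t r ϑ φ
      = dT (dT u) t r ϑ φ - ((Del M k r / r ^ 2 : ℝ) : ℂ) * dT (dR u) t r ϑ φ :=
    ((hasDerivAt_T (smooth_dT hu) hp).sub
      ((hasDerivAt_T (smooth_dR hu) hp).const_mul _)).deriv
  have hR1 : dR (opLb M k u) t r ϑ φ
      = dR (dT u) t r ϑ φ - (((2 * k ^ 2 * r + 2 * M / r ^ 2 : ℝ) : ℂ) * dR u t r ϑ φ
          + ((Del M k r / r ^ 2 : ℝ) : ℂ) * dR (dR u) t r ϑ φ) :=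
    ((hasDerivAt_R (smooth_dT hu) hp).sub
      (haF.mul (hasDerivAt_R (smooth_dR hu) hp))).deriv
  have hT2 : dT (opL M k u) t r ϑ φ
      = dT (dT u) t r ϑ φ + ((Del M k r / r ^ 2 : ℝ) : ℂ) * dT (dR u) t r ϑ φ :=
    ((hasDerivAt_T (smooth_dT hu) hp).add
      ((hasDerivAt_T (smooth_dR hu) hp).const_mul _)).deriv
  have hR2 : dR (opL M k u) t r ϑ φ
      = dR (dT u) t r ϑ φ + (((2 * k ^ 2 * r + 2 * M / r ^ 2 : ℝ) : ℂ) * dR u t r ϑ φ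
          + ((Del M k r / r ^ 2 : ℝ) : ℂ) * dR (dR u) t r ϑ φ) :=
    ((hasDerivAt_R (smooth_dT hu) hp).add
      (haF.mul (hasDerivAt_R (smooth_dR hu) hp))).deriv
  have hcomm := dT_dR_comm hu hp
  show dT (opLb M k u) t r ϑ φ + _ * dR (opLb M k u) t r ϑ φ
      = dT (opL M k u) t r ϑ φ - _ * dR (opL M k u) t r ϑ φ
  rw [hT1, hR1, hT2, hR2, hcomm]; ring

/-! ### angular pieces -/

lemma SS_dT (hu : SmoothOnOm rp u) :
    EqOnOm rp (dT (SS u)) (SS (dT u)) := by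
  intro t r ϑ φ hq
  have h1 : dT (SS u) t r ϑ φ = (Real.sin ϑ : ℂ) * dT (dTh u) t r ϑ φ :=
    ((hasDerivAt_T (smooth_dTh hu) hq).const_mul _).deriv
  rw [h1, dT_dTh_comm hu hq]; rfl
lemma SS_dR (hu : SmoothOnOm rp u) :
    EqOnOm rp (dR (SS u)) (SS (dR u)) := by
  intro t r ϑ φ hq
  have h1 : dR (SS u) t r ϑ φ = (Real.sin ϑ : ℂ) * dR (dTh u) t r ϑ φ :=
    ((hasDerivAt_R (smooth_dTh hu) hq).const_mul _).deriv
  rw [h1, dR_dTh_comm hu hq]; rfl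
lemma SS_cmul {c : ℝ → ℂ} (hu : SmoothOnOm rp u) :
    EqOnOm rp (SS (fun t r ϑ φ => c r * u t r ϑ φ)) (fun t r ϑ φ => c r * SS u t r ϑ φ) := by
  intro t r ϑ φ hq
  have h1 : dTh (fun t r ϑ φ => c r * u t r ϑ φ) t r ϑ φ = c r * dTh u t r ϑ φ :=
    ((hasDerivAt_Th hu hq).const_mul _).deriv
  show (Real.sin ϑ : ℂ) * dTh (fun t r ϑ φ => c r * u t r ϑ φ) t r ϑ φ = _
  rw [h1]; unfold SS; ring
lemma SS_congr (h : EqOnOm rp f g) :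
    EqOnOm rp (SS f) (SS g) := by
  intro t r ϑ φ hq
  show (Real.sin ϑ : ℂ) * dTh f t r ϑ φ = (Real.sin ϑ : ℂ) * dTh g t r ϑ φ
  rw [dTh_congr h hq]

lemma pieceA_dT (hu : SmoothOnOm rp u) (hp : ((t,r,ϑ,φ) : P4) ∈ OmSet rp) :
    dT (dTh (SS u)) t r ϑ φ = dTh (SS (dT u)) t r ϑ φ := by
  rw [dT_dTh_comm (smooth_SS hu) hp]
  exact dTh_congr (SS_dT hu) hp
lemma pieceA_dR (hu : SmoothOnOm rp u) (hp : ((t,r,ϑ,φ) : P4) ∈ OmSet rp) :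
    dR (dTh (SS u)) t r ϑ φ = dTh (SS (dR u)) t r ϑ φ := by
  rw [dR_dTh_comm (smooth_SS hu) hp]
  exact dTh_congr (SS_dR hu) hp

lemma pieceB_dT (hu : SmoothOnOm rp u) (hp : ((t,r,ϑ,φ) : P4) ∈ OmSet rp) :
    dT (dPh (dPh u)) t r ϑ φ = dPh (dPh (dT u)) t r ϑ φ := by
  rw [dT_dPh_comm (smooth_dPh hu) hp]
  exact dPh_congr (fun t r ϑ φ hq => dT_dPh_comm hu hq) hp
lemma pieceB_dR (hu : SmoothOnOm rp u) (hp : ((t,r,ϑ,φ) : P4) ∈ OmSet rp) :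
    dR (dPh (dPh u)) t r ϑ φ = dPh (dPh (dR u)) t r ϑ φ := by
  rw [dR_dPh_comm (smooth_dPh hu) hp]
  exact dPh_congr (fun t r ϑ φ hq => dR_dPh_comm hu hq) hp

/-! ### `angP`/`angM` commutation with `∂ₜ`, `∂ᵣ` -/

lemma dT_angP (hu : SmoothOnOm rp u) (hp : ((t,r,ϑ,φ) : P4) ∈ OmSet rp) :
    dT (angP u) t r ϑ φ = angP (dT u) t r ϑ φ := by
  have hA := hasDerivAt_T (smooth_dTh (smooth_SS hu)) hp
  have hB := hasDerivAt_T (smooth_dPh (smooth_dPh hu)) hp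
  have hC := hasDerivAt_T (smooth_dPh hu) hp
  have hU := hasDerivAt_T hu hp
  have h1 : dT (angP u) t r ϑ φ
      = -(Real.sin ϑ : ℂ)⁻¹ * dT (dTh (SS u)) t r ϑ φ
        - (((Real.sin ϑ) ^ 2 : ℝ) : ℂ)⁻¹ * dT (dPh (dPh u)) t r ϑ φ
        - 4 * Complex.I * ((Real.cos ϑ / (Real.sin ϑ) ^ 2 : ℝ) : ℂ) * dT (dPh u) t r ϑ φ
        + 4 * (((Real.cos ϑ / Real.sin ϑ) ^ 2 : ℝ) : ℂ) * dT u t r ϑ φ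
        + 4 * dT u t r ϑ φ :=
    (((((hA.const_mul _).sub (hB.const_mul _)).sub (hC.const_mul _)).add
      (hU.const_mul _)).add (hU.const_mul 4)).deriv
  rw [h1, pieceA_dT hu hp, pieceB_dT hu hp, dT_dPh_comm hu hp]
  rfl

lemma dR_angP (hu : SmoothOnOm rp u) (hp : ((t,r,ϑ,φ) : P4) ∈ OmSet rp) :
    dR (angP u) t r ϑ φ = angP (dR u) t r ϑ φ := by
  have hA := hasDerivAt_R (smooth_dTh (smooth_SS hu)) hp
  have hB := hasDerivAt_R (smooth_dPh (smooth_dPh hu)) hp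
  have hC := hasDerivAt_R (smooth_dPh hu) hp
  have hU := hasDerivAt_R hu hp
  have h1 : dR (angP u) t r ϑ φ
      = -(Real.sin ϑ : ℂ)⁻¹ * dR (dTh (SS u)) t r ϑ φ
        - (((Real.sin ϑ) ^ 2 : ℝ) : ℂ)⁻¹ * dR (dPh (dPh u)) t r ϑ φ
        - 4 * Complex.I * ((Real.cos ϑ / (Real.sin ϑ) ^ 2 : ℝ) : ℂ) * dR (dPh u) t r ϑ φ
        + 4 * (((Real.cos ϑ / Real.sin ϑ) ^ 2 : ℝ) : ℂ) * dR u t r ϑ φ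
        + 4 * dR u t r ϑ φ :=
    (((((hA.const_mul _).sub (hB.const_mul _)).sub (hC.const_mul _)).add
      (hU.const_mul _)).add (hU.const_mul 4)).deriv
  rw [h1, pieceA_dR hu hp, pieceB_dR hu hp, dR_dPh_comm hu hp]
  rfl

lemma dT_angM (hu : SmoothOnOm rp u) (hp : ((t,r,ϑ,φ) : P4) ∈ OmSet rp) :
    dT (angM u) t r ϑ φ = angM (dT u) t r ϑ φ := by
  have hA := hasDerivAt_T (smooth_dTh (smooth_SS hu)) hp
  have hB := hasDerivAt_T (smooth_dPh (smooth_dPh hu)) hp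
  have hC := hasDerivAt_T (smooth_dPh hu) hp
  have hU := hasDerivAt_T hu hp
  have h1 : dT (angM u) t r ϑ φ
      = -(Real.sin ϑ : ℂ)⁻¹ * dT (dTh (SS u)) t r ϑ φ
        - (((Real.sin ϑ) ^ 2 : ℝ) : ℂ)⁻¹ * dT (dPh (dPh u)) t r ϑ φ
        + 4 * Complex.I * ((Real.cos ϑ / (Real.sin ϑ) ^ 2 : ℝ) : ℂ) * dT (dPh u) t r ϑ φ
        + 4 * (((Real.cos ϑ / Real.sin ϑ) ^ 2 : ℝ) : ℂ) * dT u t r ϑ φ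
        + 4 * dT u t r ϑ φ :=
    (((((hA.const_mul _).sub (hB.const_mul _)).add (hC.const_mul _)).add
      (hU.const_mul _)).add (hU.const_mul 4)).deriv
  rw [h1, pieceA_dT hu hp, pieceB_dT hu hp, dT_dPh_comm hu hp]
  rfl

lemma dR_angM (hu : SmoothOnOm rp u) (hp : ((t,r,ϑ,φ) : P4) ∈ OmSet rp) :
    dR (angM u) t r ϑ φ = angM (dR u) t r ϑ φ := by
  have hA := hasDerivAt_R (smooth_dTh (smooth_SS hu)) hp
  have hB := hasDerivAt_R (smooth_dPh (smooth_dPh hu)) hp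
  have hC := hasDerivAt_R (smooth_dPh hu) hp
  have hU := hasDerivAt_R hu hp
  have h1 : dR (angM u) t r ϑ φ
      = -(Real.sin ϑ : ℂ)⁻¹ * dR (dTh (SS u)) t r ϑ φ
        - (((Real.sin ϑ) ^ 2 : ℝ) : ℂ)⁻¹ * dR (dPh (dPh u)) t r ϑ φ
        + 4 * Complex.I * ((Real.cos ϑ / (Real.sin ϑ) ^ 2 : ℝ) : ℂ) * dR (dPh u) t r ϑ φ
        + 4 * (((Real.cos ϑ / Real.sin ϑ) ^ 2 : ℝ) : ℂ) * dR u t r ϑ φ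
        + 4 * dR u t r ϑ φ :=
    (((((hA.const_mul _).sub (hB.const_mul _)).add (hC.const_mul _)).add
      (hU.const_mul _)).add (hU.const_mul 4)).deriv
  rw [h1, pieceA_dR hu hp, pieceB_dR hu hp, dR_dPh_comm hu hp]
  rfl

/-! ### `angP`/`angM` congruence, linearity, radial multiplication -/

lemma angP_congr (h : EqOnOm rp f g) (hp : ((t,r,ϑ,φ) : P4) ∈ OmSet rp) :
    angP f t r ϑ φ = angP g t r ϑ φ := by
  have h1 : dTh (SS f) t r ϑ φ = dTh (SS g) t r ϑ φ := dTh_congr (SS_congr h) hp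
  have h2 : dPh (dPh f) t r ϑ φ = dPh (dPh g) t r ϑ φ :=
    dPh_congr (fun t r ϑ φ hq => dPh_congr h hq) hp
  have h3 : dPh f t r ϑ φ = dPh g t r ϑ φ := dPh_congr h hp
  show -(Real.sin ϑ : ℂ)⁻¹ * dTh (SS f) t r ϑ φ - _ * dPh (dPh f) t r ϑ φ
      - _ * dPh f t r ϑ φ + _ * f t r ϑ φ + 4 * f t r ϑ φ = _
  rw [h1, h2, h3, h t r ϑ φ hp]
  rfl

lemma angM_congr (h : EqOnOm rp f g) (hp : ((t,r,ϑ,φ) : P4) ∈ OmSet rp) :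
    angM f t r ϑ φ = angM g t r ϑ φ := by
  have h1 : dTh (SS f) t r ϑ φ = dTh (SS g) t r ϑ φ := dTh_congr (SS_congr h) hp
  have h2 : dPh (dPh f) t r ϑ φ = dPh (dPh g) t r ϑ φ :=
    dPh_congr (fun t r ϑ φ hq => dPh_congr h hq) hp
  have h3 : dPh f t r ϑ φ = dPh g t r ϑ φ := dPh_congr h hp
  show -(Real.sin ϑ : ℂ)⁻¹ * dTh (SS f) t r ϑ φ - _ * dPh (dPh f) t r ϑ φ
      + _ * dPh f t r ϑ φ + _ * f t r ϑ φ + 4 * f t r ϑ φ = _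
  rw [h1, h2, h3, h t r ϑ φ hp]
  rfl

lemma angP_cmul {c : ℝ → ℂ} (hu : SmoothOnOm rp u) (hp : ((t,r,ϑ,φ) : P4) ∈ OmSet rp) :
    angP (fun t r ϑ φ => c r * u t r ϑ φ) t r ϑ φ = c r * angP u t r ϑ φ := by
  have h1 : dTh (SS (fun t r ϑ φ => c r * u t r ϑ φ)) t r ϑ φ
      = c r * dTh (SS u) t r ϑ φ := by
    rw [dTh_congr (f := SS (fun t r ϑ φ => c r * u t r ϑ φ))
      (g := fun t r ϑ φ => c r * SS u t r ϑ φ) (SS_cmul hu) hp]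
    exact ((hasDerivAt_Th (smooth_SS hu) hp).const_mul _).deriv
  have h2 : dPh (dPh (fun t r ϑ φ => c r * u t r ϑ φ)) t r ϑ φ
      = c r * dPh (dPh u) t r ϑ φ := by
    rw [dPh_congr (f := dPh (fun t r ϑ φ => c r * u t r ϑ φ))
      (g := fun t r ϑ φ => c r * dPh u t r ϑ φ)
      (fun t r ϑ φ hq => ((hasDerivAt_Ph hu hq).const_mul _).deriv) hp]
    exact ((hasDerivAt_Ph (smooth_dPh hu) hp).const_mul _).deriv
  have h3 : dPh (fun t r ϑ φ => c r * u t r ϑ φ) t r ϑ φ = c r * dPh u t r ϑ φ :=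
    ((hasDerivAt_Ph hu hp).const_mul _).deriv
  show -(Real.sin ϑ : ℂ)⁻¹ * dTh (SS _) t r ϑ φ - _ * dPh (dPh _) t r ϑ φ
      - _ * dPh _ t r ϑ φ + _ * (c r * u t r ϑ φ) + 4 * (c r * u t r ϑ φ) = _
  rw [h1, h2, h3]
  show _ = c r * (-(Real.sin ϑ : ℂ)⁻¹ * dTh (SS u) t r ϑ φ - _ * dPh (dPh u) t r ϑ φ
      - _ * dPh u t r ϑ φ + _ * u t r ϑ φ + 4 * u t r ϑ φ)
  ring

lemma angM_cmul {c : ℝ → ℂ} (hu : SmoothOnOm rp u) (hp : ((t,r,ϑ,φ) : P4) ∈ OmSet rp) :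
    angM (fun t r ϑ φ => c r * u t r ϑ φ) t r ϑ φ = c r * angM u t r ϑ φ := by
  have h1 : dTh (SS (fun t r ϑ φ => c r * u t r ϑ φ)) t r ϑ φ
      = c r * dTh (SS u) t r ϑ φ := by
    rw [dTh_congr (f := SS (fun t r ϑ φ => c r * u t r ϑ φ))
      (g := fun t r ϑ φ => c r * SS u t r ϑ φ) (SS_cmul hu) hp]
    exact ((hasDerivAt_Th (smooth_SS hu) hp).const_mul _).deriv
  have h2 : dPh (dPh (fun t r ϑ φ => c r * u t r ϑ φ)) t r ϑ φ
      = c r * dPh (dPh u) t r ϑ φ := by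
    rw [dPh_congr (f := dPh (fun t r ϑ φ => c r * u t r ϑ φ))
      (g := fun t r ϑ φ => c r * dPh u t r ϑ φ)
      (fun t r ϑ φ hq => ((hasDerivAt_Ph hu hq).const_mul _).deriv) hp]
    exact ((hasDerivAt_Ph (smooth_dPh hu) hp).const_mul _).deriv
  have h3 : dPh (fun t r ϑ φ => c r * u t r ϑ φ) t r ϑ φ = c r * dPh u t r ϑ φ :=
    ((hasDerivAt_Ph hu hp).const_mul _).deriv
  show -(Real.sin ϑ : ℂ)⁻¹ * dTh (SS _) t r ϑ φ - _ * dPh (dPh _) t r ϑ φ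
      + _ * dPh _ t r ϑ φ + _ * (c r * u t r ϑ φ) + 4 * (c r * u t r ϑ φ) = _
  rw [h1, h2, h3]
  show _ = c r * (-(Real.sin ϑ : ℂ)⁻¹ * dTh (SS u) t r ϑ φ - _ * dPh (dPh u) t r ϑ φ
      + _ * dPh u t r ϑ φ + _ * u t r ϑ φ + 4 * u t r ϑ φ)
  ring


/-! ### angular operators applied to `v - c·w` (radial `c`) -/

lemma angP_sub_cmul {v w : F4} {c : ℝ → ℂ} (hv : SmoothOnOm rp v) (hw : SmoothOnOm rp w)
    (hp : ((t,r,ϑ,φ) : P4) ∈ OmSet rp) :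
    angP (fun t r ϑ φ => v t r ϑ φ - c r * w t r ϑ φ) t r ϑ φ
      = angP v t r ϑ φ - c r * angP w t r ϑ φ := by
  have hSS : EqOnOm rp (SS (fun t r ϑ φ => v t r ϑ φ - c r * w t r ϑ φ))
      (fun t r ϑ φ => SS v t r ϑ φ - c r * SS w t r ϑ φ) := by
    intro t r ϑ φ hq
    have hd : dTh (fun t r ϑ φ => v t r ϑ φ - c r * w t r ϑ φ) t r ϑ φ
        = dTh v t r ϑ φ - c r * dTh w t r ϑ φ :=
      ((hasDerivAt_Th hv hq).sub ((hasDerivAt_Th hw hq).const_mul _)).deriv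
    show (Real.sin ϑ : ℂ) * dTh _ t r ϑ φ = _
    rw [hd]; unfold SS; ring
  have h1 : dTh (SS (fun t r ϑ φ => v t r ϑ φ - c r * w t r ϑ φ)) t r ϑ φ
      = dTh (SS v) t r ϑ φ - c r * dTh (SS w) t r ϑ φ := by
    rw [dTh_congr hSS hp]
    exact ((hasDerivAt_Th (smooth_SS hv) hp).sub
      ((hasDerivAt_Th (smooth_SS hw) hp).const_mul _)).deriv
  have hPh : EqOnOm rp (dPh (fun t r ϑ φ => v t r ϑ φ - c r * w t r ϑ φ))
      (fun t r ϑ φ => dPh v t r ϑ φ - c r * dPh w t r ϑ φ) := by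
    intro t r ϑ φ hq
    exact ((hasDerivAt_Ph hv hq).sub ((hasDerivAt_Ph hw hq).const_mul _)).deriv
  have h2 : dPh (dPh (fun t r ϑ φ => v t r ϑ φ - c r * w t r ϑ φ)) t r ϑ φ
      = dPh (dPh v) t r ϑ φ - c r * dPh (dPh w) t r ϑ φ := by
    rw [dPh_congr hPh hp]
    exact ((hasDerivAt_Ph (smooth_dPh hv) hp).sub
      ((hasDerivAt_Ph (smooth_dPh hw) hp).const_mul _)).deriv
  have h3 : dPh (fun t r ϑ φ => v t r ϑ φ - c r * w t r ϑ φ) t r ϑ φ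
      = dPh v t r ϑ φ - c r * dPh w t r ϑ φ := hPh t r ϑ φ hp
  show -(Real.sin ϑ : ℂ)⁻¹ * dTh (SS _) t r ϑ φ - _ * dPh (dPh _) t r ϑ φ
      - _ * dPh _ t r ϑ φ + _ * (v t r ϑ φ - c r * w t r ϑ φ)
      + 4 * (v t r ϑ φ - c r * w t r ϑ φ) = _
  rw [h1, h2, h3]
  show _ = (-(Real.sin ϑ : ℂ)⁻¹ * dTh (SS v) t r ϑ φ - _ * dPh (dPh v) t r ϑ φ
      - _ * dPh v t r ϑ φ + _ * v t r ϑ φ + 4 * v t r ϑ φ)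
      - c r * (-(Real.sin ϑ : ℂ)⁻¹ * dTh (SS w) t r ϑ φ - _ * dPh (dPh w) t r ϑ φ
      - _ * dPh w t r ϑ φ + _ * w t r ϑ φ + 4 * w t r ϑ φ)
  ring

lemma angM_add_cmul {v w : F4} {c : ℝ → ℂ} (hv : SmoothOnOm rp v) (hw : SmoothOnOm rp w)
    (hp : ((t,r,ϑ,φ) : P4) ∈ OmSet rp) :
    angM (fun t r ϑ φ => v t r ϑ φ + c r * w t r ϑ φ) t r ϑ φ
      = angM v t r ϑ φ + c r * angM w t r ϑ φ := by
  have hSS : EqOnOm rp (SS (fun t r ϑ φ => v t r ϑ φ + c r * w t r ϑ φ))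
      (fun t r ϑ φ => SS v t r ϑ φ + c r * SS w t r ϑ φ) := by
    intro t r ϑ φ hq
    have hd : dTh (fun t r ϑ φ => v t r ϑ φ + c r * w t r ϑ φ) t r ϑ φ
        = dTh v t r ϑ φ + c r * dTh w t r ϑ φ :=
      ((hasDerivAt_Th hv hq).add ((hasDerivAt_Th hw hq).const_mul _)).deriv
    show (Real.sin ϑ : ℂ) * dTh _ t r ϑ φ = _
    rw [hd]; unfold SS; ring
  have h1 : dTh (SS (fun t r ϑ φ => v t r ϑ φ + c r * w t r ϑ φ)) t r ϑ φ
      = dTh (SS v) t r ϑ φ + c r * dTh (SS w) t r ϑ φ := by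
    rw [dTh_congr hSS hp]
    exact ((hasDerivAt_Th (smooth_SS hv) hp).add
      ((hasDerivAt_Th (smooth_SS hw) hp).const_mul _)).deriv
  have hPh : EqOnOm rp (dPh (fun t r ϑ φ => v t r ϑ φ + c r * w t r ϑ φ))
      (fun t r ϑ φ => dPh v t r ϑ φ + c r * dPh w t r ϑ φ) := by
    intro t r ϑ φ hq
    exact ((hasDerivAt_Ph hv hq).add ((hasDerivAt_Ph hw hq).const_mul _)).deriv
  have h2 : dPh (dPh (fun t r ϑ φ => v t r ϑ φ + c r * w t r ϑ φ)) t r ϑ φ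
      = dPh (dPh v) t r ϑ φ + c r * dPh (dPh w) t r ϑ φ := by
    rw [dPh_congr hPh hp]
    exact ((hasDerivAt_Ph (smooth_dPh hv) hp).add
      ((hasDerivAt_Ph (smooth_dPh hw) hp).const_mul _)).deriv
  have h3 : dPh (fun t r ϑ φ => v t r ϑ φ + c r * w t r ϑ φ) t r ϑ φ
      = dPh v t r ϑ φ + c r * dPh w t r ϑ φ := hPh t r ϑ φ hp
  show -(Real.sin ϑ : ℂ)⁻¹ * dTh (SS _) t r ϑ φ - _ * dPh (dPh _) t r ϑ φ
      + _ * dPh _ t r ϑ φ + _ * (v t r ϑ φ + c r * w t r ϑ φ)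
      + 4 * (v t r ϑ φ + c r * w t r ϑ φ) = _
  rw [h1, h2, h3]
  show _ = (-(Real.sin ϑ : ℂ)⁻¹ * dTh (SS v) t r ϑ φ - _ * dPh (dPh v) t r ϑ φ
      + _ * dPh v t r ϑ φ + _ * v t r ϑ φ + 4 * v t r ϑ φ)
      + c r * (-(Real.sin ϑ : ℂ)⁻¹ * dTh (SS w) t r ϑ φ - _ * dPh (dPh w) t r ϑ φ
      + _ * dPh w t r ϑ φ + _ * w t r ϑ φ + 4 * w t r ϑ φ)
  ring

/-! ### pointwise cancellation `w · w⁻¹` -/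

lemma wmul_winv (hM : 0 < M) (hk : 0 < k) (hrp : 0 < rp)
    (hroot : rp + k ^ 2 * rp ^ 3 - 2 * M = 0) {v : F4} :
    EqOnOm rp (wmul M k (winv M k v)) v := by
  intro t r ϑ φ hq
  have hne : ((ww M k r : ℝ) : ℂ) ≠ 0 :=
    Complex.ofReal_ne_zero.mpr (ne_of_gt (ww_pos hM hk hrp hroot hq.1))
  show ((ww M k r : ℝ) : ℂ) * (((ww M k r : ℝ) : ℂ)⁻¹ * v t r ϑ φ) = v t r ϑ φ
  field_simp

lemma castr_ne (hrp : 0 < rp) (hr : rp < r) : (r : ℂ) ≠ 0 :=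
  Complex.ofReal_ne_zero.mpr (ne_of_gt (lt_trans hrp hr))

lemma castDel_ne (hM : 0 < M) (hk : 0 < k) (hrp : 0 < rp)
    (hroot : rp + k ^ 2 * rp ^ 3 - 2 * M = 0) (hr : rp < r) :
    (r : ℂ) ^ 2 + (k : ℂ) ^ 2 * (r : ℂ) ^ 4 - 2 * (M : ℂ) * (r : ℂ) ≠ 0 := by
  have h1 : ((Del M k r : ℝ) : ℂ) ≠ 0 :=
    Complex.ofReal_ne_zero.mpr (ne_of_gt (Del_pos hM hk hrp hroot hr))
  have h2 : ((Del M k r : ℝ) : ℂ)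
      = (r : ℂ) ^ 2 + (k : ℂ) ^ 2 * (r : ℂ) ^ 4 - 2 * (M : ℂ) * (r : ℂ) := by
    unfold Del; push_cast; ring
  rwa [h2] at h1


lemma wwP_div_ww (hM : 0 < M) (hk : 0 < k) (hrp : 0 < rp)
    (hroot : rp + k ^ 2 * rp ^ 3 - 2 * M = 0) (hr : rp < r) :
    wwP M k r / ww M k r = (6 * M - 2 * r) / r ^ 2 := by
  have hww : ww M k r ≠ 0 := ne_of_gt (ww_pos hM hk hrp hroot hr)
  have hr0 : r ≠ 0 := ne_of_gt (lt_trans hrp hr)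
  unfold wwP
  field_simp

set_option maxHeartbeats 2000000 in
lemma step1p (hM : 0 < M) (hk : 0 < k) (hrp : 0 < rp)
    (hroot : rp + k ^ 2 * rp ^ 3 - 2 * M = 0)
    {α Fp : F4} (hα : SmoothOnOm rp α)
    (hTeuk : EqOnOm rp (Tp M k α) Fp) :
    EqOnOm rp (winv M k Fp) (fun t r ϑ φ =>
      -opL M k (winv M k (opLb M k α)) t r ϑ φ
      + cF M k r * winv M k (opLb M k α) t r ϑ φ
      - angP α t r ϑ φ + 2 * α t r ϑ φ - mF M r * α t r ϑ φ) := by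
  intro t r ϑ φ hq
  have hr0 : r ≠ 0 := ne_of_gt (lt_trans hrp hq.1)
  have hψ : SmoothOnOm rp (winv M k (opLb M k α)) :=
    smooth_winv hM hk hrp hroot (smooth_opLb hrp hα)
  have fψ : EqOnOm rp (opLb M k α) (wmul M k (winv M k (opLb M k α))) :=
    fun t r ϑ φ hq2 => (wmul_winv hM hk hrp hroot t r ϑ φ hq2).symm
  have h2 : opL M k (opLb M k α) t r ϑ φ
      = wF M k r * opL M k (winv M k (opLb M k α)) t r ϑ φ
        + ((Del M k r / r ^ 2 : ℝ) : ℂ) * (((6 * M - 2 * r) / r ^ 4 : ℝ) : ℂ)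
          * winv M k (opLb M k α) t r ϑ φ :=
    (opL_congr fψ hq).trans (opL_cmul (hasDerivAt_wF hr0) hψ hq)
  have hT := hTeuk t r ϑ φ hq
  show ((ww M k r : ℝ) : ℂ)⁻¹ * Fp t r ϑ φ = _
  rw [← hT]
  show ((ww M k r : ℝ) : ℂ)⁻¹ * (-opL M k (opLb M k α) t r ϑ φ
      + 2 * ((wwP M k r / ww M k r : ℝ) : ℂ) * opLb M k α t r ϑ φ
      - ((ww M k r : ℝ) : ℂ) * (angP α t r ϑ φ - 2 * α t r ϑ φ
        + ((6 * M / r : ℝ) : ℂ) * α t r ϑ φ)) = _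
  rw [h2, fψ t r ϑ φ hq]
  show _ = -opL M k (winv M k (opLb M k α)) t r ϑ φ
      + ((wwP M k r / ww M k r : ℝ) : ℂ) * winv M k (opLb M k α) t r ϑ φ
      - angP α t r ϑ φ + 2 * α t r ϑ φ - ((6 * M / r : ℝ) : ℂ) * α t r ϑ φ
  have hwr : ww M k r ≠ 0 := ne_of_gt (ww_pos hM hk hrp hroot hq.1)
  have hwne : ((ww M k r : ℝ) : ℂ) ≠ 0 := Complex.ofReal_ne_zero.mpr hwr
  have hDel : Del M k r ≠ 0 := ne_of_gt (Del_pos hM hk hrp hroot hq.1)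
  have i1 : ((ww M k r : ℝ) : ℂ)⁻¹ * ((ww M k r : ℝ) : ℂ) = 1 := inv_mul_cancel₀ hwne
  have i2r : (ww M k r)⁻¹ * ((Del M k r / r ^ 2) * ((6 * M - 2 * r) / r ^ 4))
      = wwP M k r / ww M k r := by
    unfold wwP ww
    field_simp
  have i2 : ((ww M k r : ℝ) : ℂ)⁻¹ * (((Del M k r / r ^ 2 : ℝ) : ℂ)
      * (((6 * M - 2 * r) / r ^ 4 : ℝ) : ℂ)) = ((wwP M k r / ww M k r : ℝ) : ℂ) := by
    exact_mod_cast i2r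
  simp only [wmul, wF]
  linear_combination (-(opL M k (winv M k (opLb M k α)) t r ϑ φ)
      + 2 * ((wwP M k r / ww M k r : ℝ) : ℂ) * winv M k (opLb M k α) t r ϑ φ
      - angP α t r ϑ φ + 2 * α t r ϑ φ
      - ((6 * M / r : ℝ) : ℂ) * α t r ϑ φ) * i1
    + (-(winv M k (opLb M k α) t r ϑ φ)) * i2


set_option maxHeartbeats 2000000 in
lemma step2p (hM : 0 < M) (hk : 0 < k) (hrp : 0 < rp)
    (hroot : rp + k ^ 2 * rp ^ 3 - 2 * M = 0)
    {α Fp : F4} (hα : SmoothOnOm rp α) (hF : SmoothOnOm rp Fp)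
    (hTeuk : EqOnOm rp (Tp M k α) Fp) :
    EqOnOm rp (winv M k (opLb M k (winv M k Fp)))
      (fun t r ϑ φ =>
        -opL M k (winv M k (opLb M k (winv M k (opLb M k α)))) t r ϑ φ
        + mF M r * winv M k (opLb M k α) t r ϑ φ
        - angP (winv M k (opLb M k α)) t r ϑ φ
        - 6 * (M : ℂ) * α t r ϑ φ) := by
  intro t r ϑ φ hq
  have hr0 : r ≠ 0 := ne_of_gt (lt_trans hrp hq.1)
  have hψ : SmoothOnOm rp (winv M k (opLb M k α)) :=
    smooth_winv hM hk hrp hroot (smooth_opLb hrp hα)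
  have hΨ : SmoothOnOm rp (winv M k (opLb M k (winv M k (opLb M k α)))) :=
    smooth_winv hM hk hrp hroot (smooth_opLb hrp hψ)
  have fψ : EqOnOm rp (opLb M k α) (wmul M k (winv M k (opLb M k α))) :=
    fun t r ϑ φ hq2 => (wmul_winv hM hk hrp hroot t r ϑ φ hq2).symm
  have fΨ : EqOnOm rp (opLb M k (winv M k (opLb M k α))) (wmul M k (winv M k (opLb M k (winv M k (opLb M k α))))) :=
    fun t r ϑ φ hq2 => (wmul_winv hM hk hrp hroot t r ϑ φ hq2).symm
  have h0 : opLb M k (winv M k Fp) t r ϑ φ = opLb M k (fun t r ϑ φ =>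
      -opL M k (winv M k (opLb M k α)) t r ϑ φ
      + cF M k r * winv M k (opLb M k α) t r ϑ φ
      - angP α t r ϑ φ + 2 * α t r ϑ φ - mF M r * α t r ϑ φ) t r ϑ φ :=
    opLb_congr (step1p hM hk hrp hroot hα hTeuk) hq
  have hdT : dT (fun t r ϑ φ =>
      -opL M k (winv M k (opLb M k α)) t r ϑ φ
      + cF M k r * winv M k (opLb M k α) t r ϑ φ
      - angP α t r ϑ φ + 2 * α t r ϑ φ - mF M r * α t r ϑ φ) t r ϑ φ
      = -dT (opL M k (winv M k (opLb M k α))) t r ϑ φ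
        + cF M k r * dT (winv M k (opLb M k α)) t r ϑ φ
        - dT (angP α) t r ϑ φ + 2 * dT α t r ϑ φ - mF M r * dT α t r ϑ φ :=
    (((((hasDerivAt_T (smooth_opL hrp hψ) hq).neg).add
      ((hasDerivAt_T hψ hq).const_mul (cF M k r))).sub
      (hasDerivAt_T (smooth_angP hα) hq)).add
      ((hasDerivAt_T hα hq).const_mul 2)).sub
      ((hasDerivAt_T hα hq).const_mul (mF M r)) |>.deriv
  have hdR : dR (fun t r ϑ φ =>
      -opL M k (winv M k (opLb M k α)) t r ϑ φ
      + cF M k r * winv M k (opLb M k α) t r ϑ φ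
      - angP α t r ϑ φ + 2 * α t r ϑ φ - mF M r * α t r ϑ φ) t r ϑ φ
      = -dR (opL M k (winv M k (opLb M k α))) t r ϑ φ
        + ((((2 * r - 12 * M) / r ^ 3 : ℝ) : ℂ) * winv M k (opLb M k α) t r ϑ φ + cF M k r * dR (winv M k (opLb M k α)) t r ϑ φ)
        - dR (angP α) t r ϑ φ + 2 * dR α t r ϑ φ
        - (((-(6 * M) / r ^ 2 : ℝ) : ℂ) * α t r ϑ φ + mF M r * dR α t r ϑ φ) :=
    (((((hasDerivAt_R (smooth_opL hrp hψ) hq).neg).add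
      ((hasDerivAt_cF hM hk hrp hroot hq.1).mul (hasDerivAt_R hψ hq))).sub
      (hasDerivAt_R (smooth_angP hα) hq)).add
      ((hasDerivAt_R hα hq).const_mul 2)).sub
      ((hasDerivAt_mF hr0).mul (hasDerivAt_R hα hq)) |>.deriv
  have R1 : dT (opL M k (winv M k (opLb M k α))) t r ϑ φ - ((Del M k r / r ^ 2 : ℝ) : ℂ) * dR (opL M k (winv M k (opLb M k α))) t r ϑ φ
      = ((ww M k r : ℝ) : ℂ) * opL M k (winv M k (opLb M k (winv M k (opLb M k α)))) t r ϑ φ + ((Del M k r / r ^ 2 : ℝ) : ℂ) * (((6 * M - 2 * r) / r ^ 4 : ℝ) : ℂ) * winv M k (opLb M k (winv M k (opLb M k α))) t r ϑ φ :=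
    (opL_opLb_comm hrp hψ hq).symm.trans
      ((opL_congr fΨ hq).trans (opL_cmul (hasDerivAt_wF hr0) hΨ hq))
  have R2 : dT (winv M k (opLb M k α)) t r ϑ φ - ((Del M k r / r ^ 2 : ℝ) : ℂ) * dR (winv M k (opLb M k α)) t r ϑ φ = ((ww M k r : ℝ) : ℂ) * winv M k (opLb M k (winv M k (opLb M k α))) t r ϑ φ :=
    fΨ t r ϑ φ hq
  have R3 : dT (angP α) t r ϑ φ - ((Del M k r / r ^ 2 : ℝ) : ℂ) * dR (angP α) t r ϑ φ = ((ww M k r : ℝ) : ℂ) * angP (winv M k (opLb M k α)) t r ϑ φ := by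
    rw [dT_angP hα hq, dR_angP hα hq]
    have e1 : angP (opLb M k α) t r ϑ φ
        = angP (dT α) t r ϑ φ - ((Del M k r / r ^ 2 : ℝ) : ℂ) * angP (dR α) t r ϑ φ :=
      angP_sub_cmul (c := fun s => ((Del M k s / s ^ 2 : ℝ) : ℂ))
        (smooth_dT hα) (smooth_dR hα) hq
    rw [← e1, angP_congr fψ hq]
    exact angP_cmul (c := wF M k) hψ hq
  have R4 : dT α t r ϑ φ - ((Del M k r / r ^ 2 : ℝ) : ℂ) * dR α t r ϑ φ = ((ww M k r : ℝ) : ℂ) * winv M k (opLb M k α) t r ϑ φ := fψ t r ϑ φ hq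
  have hwr : ww M k r ≠ 0 := ne_of_gt (ww_pos hM hk hrp hroot hq.1)
  have hwne : ((ww M k r : ℝ) : ℂ) ≠ 0 := Complex.ofReal_ne_zero.mpr hwr
  have hDel : Del M k r ≠ 0 := ne_of_gt (Del_pos hM hk hrp hroot hq.1)
  have i1 : ((ww M k r : ℝ) : ℂ)⁻¹ * ((ww M k r : ℝ) : ℂ) = 1 := inv_mul_cancel₀ hwne
  have i2 : ((ww M k r : ℝ) : ℂ)⁻¹ * (((Del M k r / r ^ 2 : ℝ) : ℂ) * (((6 * M - 2 * r) / r ^ 4 : ℝ) : ℂ)) = ((wwP M k r / ww M k r : ℝ) : ℂ) := by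
    have : (ww M k r)⁻¹ * ((Del M k r / r ^ 2) * ((6 * M - 2 * r) / r ^ 4))
        = wwP M k r / ww M k r := by
      unfold wwP ww
      field_simp
    exact_mod_cast this
  have i3 : ((ww M k r : ℝ) : ℂ)⁻¹ * (((Del M k r / r ^ 2 : ℝ) : ℂ) * (((2 * r - 12 * M) / r ^ 3 : ℝ) : ℂ)) = 2 - 2 * ((6 * M / r : ℝ) : ℂ) := by
    have : (ww M k r)⁻¹ * ((Del M k r / r ^ 2) * ((2 * r - 12 * M) / r ^ 3))
        = 2 - 2 * (6 * M / r) := by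
      unfold ww
      field_simp
      ring
    exact_mod_cast this
  have i4 : ((ww M k r : ℝ) : ℂ)⁻¹ * (((Del M k r / r ^ 2 : ℝ) : ℂ) * ((-(6 * M) / r ^ 2 : ℝ) : ℂ)) = -(6 * (M : ℂ)) := by
    have : (ww M k r)⁻¹ * ((Del M k r / r ^ 2) * (-(6 * M) / r ^ 2)) = -(6 * M) := by
      unfold ww
      field_simp
    exact_mod_cast this
  show ((ww M k r : ℝ) : ℂ)⁻¹ * opLb M k (winv M k Fp) t r ϑ φ = _
  rw [h0]
  show ((ww M k r : ℝ) : ℂ)⁻¹ * (dT (fun t r ϑ φ =>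
      -opL M k (winv M k (opLb M k α)) t r ϑ φ
      + cF M k r * winv M k (opLb M k α) t r ϑ φ
      - angP α t r ϑ φ + 2 * α t r ϑ φ - mF M r * α t r ϑ φ) t r ϑ φ - ((Del M k r / r ^ 2 : ℝ) : ℂ) * dR (fun t r ϑ φ =>
      -opL M k (winv M k (opLb M k α)) t r ϑ φ
      + cF M k r * winv M k (opLb M k α) t r ϑ φ
      - angP α t r ϑ φ + 2 * α t r ϑ φ - mF M r * α t r ϑ φ) t r ϑ φ) = _
  rw [hdT, hdR]
  simp only [cF, mF]
  linear_combination (-(((ww M k r : ℝ) : ℂ)⁻¹)) * R1 + (((ww M k r : ℝ) : ℂ)⁻¹ * ((wwP M k r / ww M k r : ℝ) : ℂ)) * R2 + (-(((ww M k r : ℝ) : ℂ)⁻¹)) * R3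
    + (((ww M k r : ℝ) : ℂ)⁻¹ * (2 - ((6 * M / r : ℝ) : ℂ))) * R4
    + (-(opL M k (winv M k (opLb M k (winv M k (opLb M k α)))) t r ϑ φ) + ((wwP M k r / ww M k r : ℝ) : ℂ) * winv M k (opLb M k (winv M k (opLb M k α))) t r ϑ φ - angP (winv M k (opLb M k α)) t r ϑ φ
        + (2 - ((6 * M / r : ℝ) : ℂ)) * winv M k (opLb M k α) t r ϑ φ) * i1
    + (-(winv M k (opLb M k (winv M k (opLb M k α))) t r ϑ φ)) * i2 + (-(winv M k (opLb M k α) t r ϑ φ)) * i3 + (α t r ϑ φ) * i4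


set_option maxHeartbeats 2000000 in
lemma step3p (hM : 0 < M) (hk : 0 < k) (hrp : 0 < rp)
    (hroot : rp + k ^ 2 * rp ^ 3 - 2 * M = 0)
    {α Fp : F4} (hα : SmoothOnOm rp α) (hF : SmoothOnOm rp Fp)
    (hTeuk : EqOnOm rp (Tp M k α) Fp) :
    EqOnOm rp (opLb M k (winv M k (opLb M k (winv M k Fp))))
      (RWp M k (winv M k (opLb M k (winv M k (opLb M k α))))) := by
  intro t r ϑ φ hq
  have hr0 : r ≠ 0 := ne_of_gt (lt_trans hrp hq.1)
  have hψ : SmoothOnOm rp (winv M k (opLb M k α)) :=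
    smooth_winv hM hk hrp hroot (smooth_opLb hrp hα)
  have hΨ : SmoothOnOm rp (winv M k (opLb M k (winv M k (opLb M k α)))) :=
    smooth_winv hM hk hrp hroot (smooth_opLb hrp hψ)
  have fψ : EqOnOm rp (opLb M k α) (wmul M k (winv M k (opLb M k α))) :=
    fun t r ϑ φ hq2 => (wmul_winv hM hk hrp hroot t r ϑ φ hq2).symm
  have fΨ : EqOnOm rp (opLb M k (winv M k (opLb M k α))) (wmul M k (winv M k (opLb M k (winv M k (opLb M k α))))) :=
    fun t r ϑ φ hq2 => (wmul_winv hM hk hrp hroot t r ϑ φ hq2).symm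
  have h0 : opLb M k (winv M k (opLb M k (winv M k Fp))) t r ϑ φ
      = opLb M k (fun t r ϑ φ =>
        -opL M k (winv M k (opLb M k (winv M k (opLb M k α)))) t r ϑ φ
        + mF M r * winv M k (opLb M k α) t r ϑ φ
        - angP (winv M k (opLb M k α)) t r ϑ φ
        - 6 * (M : ℂ) * α t r ϑ φ) t r ϑ φ :=
    opLb_congr (step2p hM hk hrp hroot hα hF hTeuk) hq
  have hdT : dT (fun t r ϑ φ =>
        -opL M k (winv M k (opLb M k (winv M k (opLb M k α)))) t r ϑ φ
        + mF M r * winv M k (opLb M k α) t r ϑ φ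
        - angP (winv M k (opLb M k α)) t r ϑ φ
        - 6 * (M : ℂ) * α t r ϑ φ) t r ϑ φ
      = -dT (opL M k (winv M k (opLb M k (winv M k (opLb M k α))))) t r ϑ φ
        + mF M r * dT (winv M k (opLb M k α)) t r ϑ φ
        - dT (angP (winv M k (opLb M k α))) t r ϑ φ - 6 * (M : ℂ) * dT α t r ϑ φ :=
    (((((hasDerivAt_T (smooth_opL hrp hΨ) hq).neg).add
      ((hasDerivAt_T hψ hq).const_mul (mF M r))).sub
      (hasDerivAt_T (smooth_angP hψ) hq)).sub
      ((hasDerivAt_T hα hq).const_mul (6 * (M : ℂ)))) |>.deriv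
  have hdR : dR (fun t r ϑ φ =>
        -opL M k (winv M k (opLb M k (winv M k (opLb M k α)))) t r ϑ φ
        + mF M r * winv M k (opLb M k α) t r ϑ φ
        - angP (winv M k (opLb M k α)) t r ϑ φ
        - 6 * (M : ℂ) * α t r ϑ φ) t r ϑ φ
      = -dR (opL M k (winv M k (opLb M k (winv M k (opLb M k α))))) t r ϑ φ
        + (((-(6 * M) / r ^ 2 : ℝ) : ℂ) * winv M k (opLb M k α) t r ϑ φ + mF M r * dR (winv M k (opLb M k α)) t r ϑ φ)
        - dR (angP (winv M k (opLb M k α))) t r ϑ φ - 6 * (M : ℂ) * dR α t r ϑ φ :=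
    (((((hasDerivAt_R (smooth_opL hrp hΨ) hq).neg).add
      ((hasDerivAt_mF hr0).mul (hasDerivAt_R hψ hq))).sub
      (hasDerivAt_R (smooth_angP hψ) hq)).sub
      ((hasDerivAt_R hα hq).const_mul (6 * (M : ℂ)))) |>.deriv
  have R1 : dT (opL M k (winv M k (opLb M k (winv M k (opLb M k α))))) t r ϑ φ - ((Del M k r / r ^ 2 : ℝ) : ℂ) * dR (opL M k (winv M k (opLb M k (winv M k (opLb M k α))))) t r ϑ φ
      = opL M k (opLb M k (winv M k (opLb M k (winv M k (opLb M k α))))) t r ϑ φ :=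
    (opL_opLb_comm hrp hΨ hq).symm
  have R2 : dT (winv M k (opLb M k α)) t r ϑ φ - ((Del M k r / r ^ 2 : ℝ) : ℂ) * dR (winv M k (opLb M k α)) t r ϑ φ = ((ww M k r : ℝ) : ℂ) * winv M k (opLb M k (winv M k (opLb M k α))) t r ϑ φ :=
    fΨ t r ϑ φ hq
  have R3 : dT (angP (winv M k (opLb M k α))) t r ϑ φ - ((Del M k r / r ^ 2 : ℝ) : ℂ) * dR (angP (winv M k (opLb M k α))) t r ϑ φ
      = ((ww M k r : ℝ) : ℂ) * angP (winv M k (opLb M k (winv M k (opLb M k α)))) t r ϑ φ := by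
    rw [dT_angP hψ hq, dR_angP hψ hq]
    have e1 : angP (opLb M k (winv M k (opLb M k α))) t r ϑ φ
        = angP (dT (winv M k (opLb M k α))) t r ϑ φ - ((Del M k r / r ^ 2 : ℝ) : ℂ) * angP (dR (winv M k (opLb M k α))) t r ϑ φ :=
      angP_sub_cmul (c := fun s => ((Del M k s / s ^ 2 : ℝ) : ℂ))
        (smooth_dT hψ) (smooth_dR hψ) hq
    rw [← e1, angP_congr fΨ hq]
    exact angP_cmul (c := wF M k) hΨ hq
  have R4 : dT α t r ϑ φ - ((Del M k r / r ^ 2 : ℝ) : ℂ) * dR α t r ϑ φ = ((ww M k r : ℝ) : ℂ) * winv M k (opLb M k α) t r ϑ φ := fψ t r ϑ φ hq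
  have i5 : ((Del M k r / r ^ 2 : ℝ) : ℂ) * ((-(6 * M) / r ^ 2 : ℝ) : ℂ) = -(6 * (M : ℂ)) * ((ww M k r : ℝ) : ℂ) := by
    have : (Del M k r / r ^ 2) * (-(6 * M) / r ^ 2) = -(6 * M) * ww M k r := by
      unfold ww
      field_simp
    exact_mod_cast this
  rw [h0]
  show dT (fun t r ϑ φ =>
        -opL M k (winv M k (opLb M k (winv M k (opLb M k α)))) t r ϑ φ
        + mF M r * winv M k (opLb M k α) t r ϑ φ
        - angP (winv M k (opLb M k α)) t r ϑ φ
        - 6 * (M : ℂ) * α t r ϑ φ) t r ϑ φ - ((Del M k r / r ^ 2 : ℝ) : ℂ) * dR (fun t r ϑ φ =>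
        -opL M k (winv M k (opLb M k (winv M k (opLb M k α)))) t r ϑ φ
        + mF M r * winv M k (opLb M k α) t r ϑ φ
        - angP (winv M k (opLb M k α)) t r ϑ φ
        - 6 * (M : ℂ) * α t r ϑ φ) t r ϑ φ = _
  rw [hdT, hdR]
  show _ = -opL M k (opLb M k (winv M k (opLb M k (winv M k (opLb M k α))))) t r ϑ φ
      - ((ww M k r : ℝ) : ℂ) * (angP (winv M k (opLb M k (winv M k (opLb M k α)))) t r ϑ φ - ((6 * M / r : ℝ) : ℂ) * winv M k (opLb M k (winv M k (opLb M k α))) t r ϑ φ)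
  simp only [mF]
  linear_combination (-1 : ℂ) * R1 + ((6 * M / r : ℝ) : ℂ) * R2 + (-1 : ℂ) * R3
    + (-(6 * (M : ℂ))) * R4 + (-(winv M k (opLb M k α) t r ϑ φ)) * i5


set_option maxHeartbeats 2000000 in
lemma step1m (hM : 0 < M) (hk : 0 < k) (hrp : 0 < rp)
    (hroot : rp + k ^ 2 * rp ^ 3 - 2 * M = 0)
    {α Fm : F4} (hα : SmoothOnOm rp α)
    (hTeuk : EqOnOm rp (Tm M k α) Fm) :
    EqOnOm rp (winv M k Fm) (fun t r ϑ φ =>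
      -opLb M k (winv M k (opL M k α)) t r ϑ φ
      - cF M k r * winv M k (opL M k α) t r ϑ φ
      - angM α t r ϑ φ + 2 * α t r ϑ φ - mF M r * α t r ϑ φ) := by
  intro t r ϑ φ hq
  have hr0 : r ≠ 0 := ne_of_gt (lt_trans hrp hq.1)
  have hψ : SmoothOnOm rp (winv M k (opL M k α)) :=
    smooth_winv hM hk hrp hroot (smooth_opL hrp hα)
  have fψ : EqOnOm rp (opL M k α) (wmul M k (winv M k (opL M k α))) :=
    fun t r ϑ φ hq2 => (wmul_winv hM hk hrp hroot t r ϑ φ hq2).symm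
  have h2 : opL M k (opLb M k α) t r ϑ φ
      = ((ww M k r : ℝ) : ℂ) * opLb M k (winv M k (opL M k α)) t r ϑ φ - ((Del M k r / r ^ 2 : ℝ) : ℂ) * (((6 * M - 2 * r) / r ^ 4 : ℝ) : ℂ) * winv M k (opL M k α) t r ϑ φ := by
    rw [opL_opLb_comm hrp hα hq]
    exact (opLb_congr fψ hq).trans (opLb_cmul (hasDerivAt_wF hr0) hψ hq)
  have hT := hTeuk t r ϑ φ hq
  show ((ww M k r : ℝ) : ℂ)⁻¹ * Fm t r ϑ φ = _
  rw [← hT]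
  show ((ww M k r : ℝ) : ℂ)⁻¹ * (-opL M k (opLb M k α) t r ϑ φ
      - 2 * ((wwP M k r / ww M k r : ℝ) : ℂ) * opL M k α t r ϑ φ
      - ((ww M k r : ℝ) : ℂ) * (angM α t r ϑ φ - 2 * α t r ϑ φ + ((6 * M / r : ℝ) : ℂ) * α t r ϑ φ)) = _
  rw [h2, fψ t r ϑ φ hq]
  show _ = -opLb M k (winv M k (opL M k α)) t r ϑ φ - ((wwP M k r / ww M k r : ℝ) : ℂ) * winv M k (opL M k α) t r ϑ φ
      - angM α t r ϑ φ + 2 * α t r ϑ φ - ((6 * M / r : ℝ) : ℂ) * α t r ϑ φ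
  have hwr : ww M k r ≠ 0 := ne_of_gt (ww_pos hM hk hrp hroot hq.1)
  have hwne : ((ww M k r : ℝ) : ℂ) ≠ 0 := Complex.ofReal_ne_zero.mpr hwr
  have hDel : Del M k r ≠ 0 := ne_of_gt (Del_pos hM hk hrp hroot hq.1)
  have i1 : ((ww M k r : ℝ) : ℂ)⁻¹ * ((ww M k r : ℝ) : ℂ) = 1 := inv_mul_cancel₀ hwne
  have i2 : ((ww M k r : ℝ) : ℂ)⁻¹ * (((Del M k r / r ^ 2 : ℝ) : ℂ) * (((6 * M - 2 * r) / r ^ 4 : ℝ) : ℂ)) = ((wwP M k r / ww M k r : ℝ) : ℂ) := by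
    have : (ww M k r)⁻¹ * ((Del M k r / r ^ 2) * ((6 * M - 2 * r) / r ^ 4))
        = wwP M k r / ww M k r := by
      unfold wwP ww
      field_simp
    exact_mod_cast this
  simp only [wmul]
  linear_combination (-(opLb M k (winv M k (opL M k α)) t r ϑ φ) - 2 * ((wwP M k r / ww M k r : ℝ) : ℂ) * winv M k (opL M k α) t r ϑ φ
      - angM α t r ϑ φ + 2 * α t r ϑ φ - ((6 * M / r : ℝ) : ℂ) * α t r ϑ φ) * i1
    + (winv M k (opL M k α) t r ϑ φ) * i2

set_option maxHeartbeats 2000000 in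
lemma step2m (hM : 0 < M) (hk : 0 < k) (hrp : 0 < rp)
    (hroot : rp + k ^ 2 * rp ^ 3 - 2 * M = 0)
    {α Fm : F4} (hα : SmoothOnOm rp α) (hF : SmoothOnOm rp Fm)
    (hTeuk : EqOnOm rp (Tm M k α) Fm) :
    EqOnOm rp (winv M k (opL M k (winv M k Fm))) (fun t r ϑ φ =>
        -opLb M k (winv M k (opL M k (winv M k (opL M k α)))) t r ϑ φ
        + mF M r * winv M k (opL M k α) t r ϑ φ
        - angM (winv M k (opL M k α)) t r ϑ φ
        + 6 * (M : ℂ) * α t r ϑ φ) := by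
  intro t r ϑ φ hq
  have hr0 : r ≠ 0 := ne_of_gt (lt_trans hrp hq.1)
  have hψ : SmoothOnOm rp (winv M k (opL M k α)) :=
    smooth_winv hM hk hrp hroot (smooth_opL hrp hα)
  have hΨ : SmoothOnOm rp (winv M k (opL M k (winv M k (opL M k α)))) :=
    smooth_winv hM hk hrp hroot (smooth_opL hrp hψ)
  have fψ : EqOnOm rp (opL M k α) (wmul M k (winv M k (opL M k α))) :=
    fun t r ϑ φ hq2 => (wmul_winv hM hk hrp hroot t r ϑ φ hq2).symm
  have fΨ : EqOnOm rp (opL M k (winv M k (opL M k α))) (wmul M k (winv M k (opL M k (winv M k (opL M k α))))) :=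
    fun t r ϑ φ hq2 => (wmul_winv hM hk hrp hroot t r ϑ φ hq2).symm
  have h0 : opL M k (winv M k Fm) t r ϑ φ = opL M k (fun t r ϑ φ =>
      -opLb M k (winv M k (opL M k α)) t r ϑ φ
      - cF M k r * winv M k (opL M k α) t r ϑ φ
      - angM α t r ϑ φ + 2 * α t r ϑ φ - mF M r * α t r ϑ φ) t r ϑ φ :=
    opL_congr (step1m hM hk hrp hroot hα hTeuk) hq
  have hdT : dT (fun t r ϑ φ =>
      -opLb M k (winv M k (opL M k α)) t r ϑ φ
      - cF M k r * winv M k (opL M k α) t r ϑ φ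
      - angM α t r ϑ φ + 2 * α t r ϑ φ - mF M r * α t r ϑ φ) t r ϑ φ
      = -dT (opLb M k (winv M k (opL M k α))) t r ϑ φ
        - cF M k r * dT (winv M k (opL M k α)) t r ϑ φ
        - dT (angM α) t r ϑ φ + 2 * dT α t r ϑ φ - mF M r * dT α t r ϑ φ :=
    (((((hasDerivAt_T (smooth_opLb hrp hψ) hq).neg).sub
      ((hasDerivAt_T hψ hq).const_mul (cF M k r))).sub
      (hasDerivAt_T (smooth_angM hα) hq)).add
      ((hasDerivAt_T hα hq).const_mul 2)).sub
      ((hasDerivAt_T hα hq).const_mul (mF M r)) |>.deriv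
  have hdR : dR (fun t r ϑ φ =>
      -opLb M k (winv M k (opL M k α)) t r ϑ φ
      - cF M k r * winv M k (opL M k α) t r ϑ φ
      - angM α t r ϑ φ + 2 * α t r ϑ φ - mF M r * α t r ϑ φ) t r ϑ φ
      = -dR (opLb M k (winv M k (opL M k α))) t r ϑ φ
        - ((((2 * r - 12 * M) / r ^ 3 : ℝ) : ℂ) * winv M k (opL M k α) t r ϑ φ + cF M k r * dR (winv M k (opL M k α)) t r ϑ φ)
        - dR (angM α) t r ϑ φ + 2 * dR α t r ϑ φ
        - (((-(6 * M) / r ^ 2 : ℝ) : ℂ) * α t r ϑ φ + mF M r * dR α t r ϑ φ) :=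
    (((((hasDerivAt_R (smooth_opLb hrp hψ) hq).neg).sub
      ((hasDerivAt_cF hM hk hrp hroot hq.1).mul (hasDerivAt_R hψ hq))).sub
      (hasDerivAt_R (smooth_angM hα) hq)).add
      ((hasDerivAt_R hα hq).const_mul 2)).sub
      ((hasDerivAt_mF hr0).mul (hasDerivAt_R hα hq)) |>.deriv
  have R1 : dT (opLb M k (winv M k (opL M k α))) t r ϑ φ + ((Del M k r / r ^ 2 : ℝ) : ℂ) * dR (opLb M k (winv M k (opL M k α))) t r ϑ φ
      = ((ww M k r : ℝ) : ℂ) * opLb M k (winv M k (opL M k (winv M k (opL M k α)))) t r ϑ φ - ((Del M k r / r ^ 2 : ℝ) : ℂ) * (((6 * M - 2 * r) / r ^ 4 : ℝ) : ℂ) * winv M k (opL M k (winv M k (opL M k α))) t r ϑ φ := by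
    have e0 : opL M k (opLb M k (winv M k (opL M k α))) t r ϑ φ = opLb M k (opL M k (winv M k (opL M k α))) t r ϑ φ :=
      opL_opLb_comm hrp hψ hq
    exact e0.trans ((opLb_congr fΨ hq).trans (opLb_cmul (hasDerivAt_wF hr0) hΨ hq))
  have R2 : dT (winv M k (opL M k α)) t r ϑ φ + ((Del M k r / r ^ 2 : ℝ) : ℂ) * dR (winv M k (opL M k α)) t r ϑ φ = ((ww M k r : ℝ) : ℂ) * winv M k (opL M k (winv M k (opL M k α))) t r ϑ φ :=
    fΨ t r ϑ φ hq
  have R3 : dT (angM α) t r ϑ φ + ((Del M k r / r ^ 2 : ℝ) : ℂ) * dR (angM α) t r ϑ φ = ((ww M k r : ℝ) : ℂ) * angM (winv M k (opL M k α)) t r ϑ φ := by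
    rw [dT_angM hα hq, dR_angM hα hq]
    have e1 : angM (opL M k α) t r ϑ φ
        = angM (dT α) t r ϑ φ + ((Del M k r / r ^ 2 : ℝ) : ℂ) * angM (dR α) t r ϑ φ :=
      angM_add_cmul (c := fun s => ((Del M k s / s ^ 2 : ℝ) : ℂ))
        (smooth_dT hα) (smooth_dR hα) hq
    rw [← e1, angM_congr fψ hq]
    exact angM_cmul (c := wF M k) hψ hq
  have R4 : dT α t r ϑ φ + ((Del M k r / r ^ 2 : ℝ) : ℂ) * dR α t r ϑ φ = ((ww M k r : ℝ) : ℂ) * winv M k (opL M k α) t r ϑ φ := fψ t r ϑ φ hq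
  have hwr : ww M k r ≠ 0 := ne_of_gt (ww_pos hM hk hrp hroot hq.1)
  have hwne : ((ww M k r : ℝ) : ℂ) ≠ 0 := Complex.ofReal_ne_zero.mpr hwr
  have hDel : Del M k r ≠ 0 := ne_of_gt (Del_pos hM hk hrp hroot hq.1)
  have i1 : ((ww M k r : ℝ) : ℂ)⁻¹ * ((ww M k r : ℝ) : ℂ) = 1 := inv_mul_cancel₀ hwne
  have i2 : ((ww M k r : ℝ) : ℂ)⁻¹ * (((Del M k r / r ^ 2 : ℝ) : ℂ) * (((6 * M - 2 * r) / r ^ 4 : ℝ) : ℂ)) = ((wwP M k r / ww M k r : ℝ) : ℂ) := by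
    have : (ww M k r)⁻¹ * ((Del M k r / r ^ 2) * ((6 * M - 2 * r) / r ^ 4))
        = wwP M k r / ww M k r := by
      unfold wwP ww
      field_simp
    exact_mod_cast this
  have i3 : ((ww M k r : ℝ) : ℂ)⁻¹ * (((Del M k r / r ^ 2 : ℝ) : ℂ) * (((2 * r - 12 * M) / r ^ 3 : ℝ) : ℂ)) = 2 - 2 * ((6 * M / r : ℝ) : ℂ) := by
    have : (ww M k r)⁻¹ * ((Del M k r / r ^ 2) * ((2 * r - 12 * M) / r ^ 3))
        = 2 - 2 * (6 * M / r) := by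
      unfold ww
      field_simp
      ring
    exact_mod_cast this
  have i4 : ((ww M k r : ℝ) : ℂ)⁻¹ * (((Del M k r / r ^ 2 : ℝ) : ℂ) * ((-(6 * M) / r ^ 2 : ℝ) : ℂ)) = -(6 * (M : ℂ)) := by
    have : (ww M k r)⁻¹ * ((Del M k r / r ^ 2) * (-(6 * M) / r ^ 2)) = -(6 * M) := by
      unfold ww
      field_simp
    exact_mod_cast this
  show ((ww M k r : ℝ) : ℂ)⁻¹ * opL M k (winv M k Fm) t r ϑ φ = _
  rw [h0]
  show ((ww M k r : ℝ) : ℂ)⁻¹ * (dT (fun t r ϑ φ =>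
      -opLb M k (winv M k (opL M k α)) t r ϑ φ
      - cF M k r * winv M k (opL M k α) t r ϑ φ
      - angM α t r ϑ φ + 2 * α t r ϑ φ - mF M r * α t r ϑ φ) t r ϑ φ + ((Del M k r / r ^ 2 : ℝ) : ℂ) * dR (fun t r ϑ φ =>
      -opLb M k (winv M k (opL M k α)) t r ϑ φ
      - cF M k r * winv M k (opL M k α) t r ϑ φ
      - angM α t r ϑ φ + 2 * α t r ϑ φ - mF M r * α t r ϑ φ) t r ϑ φ) = _
  rw [hdT, hdR]
  simp only [cF, mF]
  linear_combination (-(((ww M k r : ℝ) : ℂ)⁻¹)) * R1 + (-(((ww M k r : ℝ) : ℂ)⁻¹ * ((wwP M k r / ww M k r : ℝ) : ℂ))) * R2 + (-(((ww M k r : ℝ) : ℂ)⁻¹)) * R3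
    + (((ww M k r : ℝ) : ℂ)⁻¹ * (2 - ((6 * M / r : ℝ) : ℂ))) * R4
    + (-(opLb M k (winv M k (opL M k (winv M k (opL M k α)))) t r ϑ φ) - ((wwP M k r / ww M k r : ℝ) : ℂ) * winv M k (opL M k (winv M k (opL M k α))) t r ϑ φ - angM (winv M k (opL M k α)) t r ϑ φ
        + (2 - ((6 * M / r : ℝ) : ℂ)) * winv M k (opL M k α) t r ϑ φ) * i1
    + (winv M k (opL M k (winv M k (opL M k α))) t r ϑ φ) * i2 + (-(winv M k (opL M k α) t r ϑ φ)) * i3 + (-(α t r ϑ φ)) * i4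

set_option maxHeartbeats 2000000 in
lemma step3m (hM : 0 < M) (hk : 0 < k) (hrp : 0 < rp)
    (hroot : rp + k ^ 2 * rp ^ 3 - 2 * M = 0)
    {α Fm : F4} (hα : SmoothOnOm rp α) (hF : SmoothOnOm rp Fm)
    (hTeuk : EqOnOm rp (Tm M k α) Fm) :
    EqOnOm rp (opL M k (winv M k (opL M k (winv M k Fm))))
      (RWm M k (winv M k (opL M k (winv M k (opL M k α))))) := by
  intro t r ϑ φ hq
  have hr0 : r ≠ 0 := ne_of_gt (lt_trans hrp hq.1)
  have hψ : SmoothOnOm rp (winv M k (opL M k α)) :=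
    smooth_winv hM hk hrp hroot (smooth_opL hrp hα)
  have hΨ : SmoothOnOm rp (winv M k (opL M k (winv M k (opL M k α)))) :=
    smooth_winv hM hk hrp hroot (smooth_opL hrp hψ)
  have fψ : EqOnOm rp (opL M k α) (wmul M k (winv M k (opL M k α))) :=
    fun t r ϑ φ hq2 => (wmul_winv hM hk hrp hroot t r ϑ φ hq2).symm
  have fΨ : EqOnOm rp (opL M k (winv M k (opL M k α))) (wmul M k (winv M k (opL M k (winv M k (opL M k α))))) :=
    fun t r ϑ φ hq2 => (wmul_winv hM hk hrp hroot t r ϑ φ hq2).symm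
  have h0 : opL M k (winv M k (opL M k (winv M k Fm))) t r ϑ φ
      = opL M k (fun t r ϑ φ =>
        -opLb M k (winv M k (opL M k (winv M k (opL M k α)))) t r ϑ φ
        + mF M r * winv M k (opL M k α) t r ϑ φ
        - angM (winv M k (opL M k α)) t r ϑ φ
        + 6 * (M : ℂ) * α t r ϑ φ) t r ϑ φ :=
    opL_congr (step2m hM hk hrp hroot hα hF hTeuk) hq
  have hdT : dT (fun t r ϑ φ =>
        -opLb M k (winv M k (opL M k (winv M k (opL M k α)))) t r ϑ φ
        + mF M r * winv M k (opL M k α) t r ϑ φ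
        - angM (winv M k (opL M k α)) t r ϑ φ
        + 6 * (M : ℂ) * α t r ϑ φ) t r ϑ φ
      = -dT (opLb M k (winv M k (opL M k (winv M k (opL M k α))))) t r ϑ φ
        + mF M r * dT (winv M k (opL M k α)) t r ϑ φ
        - dT (angM (winv M k (opL M k α))) t r ϑ φ + 6 * (M : ℂ) * dT α t r ϑ φ :=
    (((((hasDerivAt_T (smooth_opLb hrp hΨ) hq).neg).add
      ((hasDerivAt_T hψ hq).const_mul (mF M r))).sub
      (hasDerivAt_T (smooth_angM hψ) hq)).add
      ((hasDerivAt_T hα hq).const_mul (6 * (M : ℂ)))) |>.deriv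
  have hdR : dR (fun t r ϑ φ =>
        -opLb M k (winv M k (opL M k (winv M k (opL M k α)))) t r ϑ φ
        + mF M r * winv M k (opL M k α) t r ϑ φ
        - angM (winv M k (opL M k α)) t r ϑ φ
        + 6 * (M : ℂ) * α t r ϑ φ) t r ϑ φ
      = -dR (opLb M k (winv M k (opL M k (winv M k (opL M k α))))) t r ϑ φ
        + (((-(6 * M) / r ^ 2 : ℝ) : ℂ) * winv M k (opL M k α) t r ϑ φ + mF M r * dR (winv M k (opL M k α)) t r ϑ φ)
        - dR (angM (winv M k (opL M k α))) t r ϑ φ + 6 * (M : ℂ) * dR α t r ϑ φ :=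
    (((((hasDerivAt_R (smooth_opLb hrp hΨ) hq).neg).add
      ((hasDerivAt_mF hr0).mul (hasDerivAt_R hψ hq))).sub
      (hasDerivAt_R (smooth_angM hψ) hq)).add
      ((hasDerivAt_R hα hq).const_mul (6 * (M : ℂ)))) |>.deriv
  have R1 : dT (opLb M k (winv M k (opL M k (winv M k (opL M k α))))) t r ϑ φ + ((Del M k r / r ^ 2 : ℝ) : ℂ) * dR (opLb M k (winv M k (opL M k (winv M k (opL M k α))))) t r ϑ φ
      = opL M k (opLb M k (winv M k (opL M k (winv M k (opL M k α))))) t r ϑ φ := rfl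
  have R2 : dT (winv M k (opL M k α)) t r ϑ φ + ((Del M k r / r ^ 2 : ℝ) : ℂ) * dR (winv M k (opL M k α)) t r ϑ φ = ((ww M k r : ℝ) : ℂ) * winv M k (opL M k (winv M k (opL M k α))) t r ϑ φ :=
    fΨ t r ϑ φ hq
  have R3 : dT (angM (winv M k (opL M k α))) t r ϑ φ + ((Del M k r / r ^ 2 : ℝ) : ℂ) * dR (angM (winv M k (opL M k α))) t r ϑ φ
      = ((ww M k r : ℝ) : ℂ) * angM (winv M k (opL M k (winv M k (opL M k α)))) t r ϑ φ := by
    rw [dT_angM hψ hq, dR_angM hψ hq]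
    have e1 : angM (opL M k (winv M k (opL M k α))) t r ϑ φ
        = angM (dT (winv M k (opL M k α))) t r ϑ φ + ((Del M k r / r ^ 2 : ℝ) : ℂ) * angM (dR (winv M k (opL M k α))) t r ϑ φ :=
      angM_add_cmul (c := fun s => ((Del M k s / s ^ 2 : ℝ) : ℂ))
        (smooth_dT hψ) (smooth_dR hψ) hq
    rw [← e1, angM_congr fΨ hq]
    exact angM_cmul (c := wF M k) hΨ hq
  have R4 : dT α t r ϑ φ + ((Del M k r / r ^ 2 : ℝ) : ℂ) * dR α t r ϑ φ = ((ww M k r : ℝ) : ℂ) * winv M k (opL M k α) t r ϑ φ := fψ t r ϑ φ hq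
  have i5 : ((Del M k r / r ^ 2 : ℝ) : ℂ) * ((-(6 * M) / r ^ 2 : ℝ) : ℂ) = -(6 * (M : ℂ)) * ((ww M k r : ℝ) : ℂ) := by
    have : (Del M k r / r ^ 2) * (-(6 * M) / r ^ 2) = -(6 * M) * ww M k r := by
      unfold ww
      field_simp
    exact_mod_cast this
  rw [h0]
  show dT (fun t r ϑ φ =>
        -opLb M k (winv M k (opL M k (winv M k (opL M k α)))) t r ϑ φ
        + mF M r * winv M k (opL M k α) t r ϑ φ
        - angM (winv M k (opL M k α)) t r ϑ φ
        + 6 * (M : ℂ) * α t r ϑ φ) t r ϑ φ + ((Del M k r / r ^ 2 : ℝ) : ℂ) * dR (fun t r ϑ φ =>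
        -opLb M k (winv M k (opL M k (winv M k (opL M k α)))) t r ϑ φ
        + mF M r * winv M k (opL M k α) t r ϑ φ
        - angM (winv M k (opL M k α)) t r ϑ φ
        + 6 * (M : ℂ) * α t r ϑ φ) t r ϑ φ = _
  rw [hdT, hdR]
  show _ = -opL M k (opLb M k (winv M k (opL M k (winv M k (opL M k α))))) t r ϑ φ
      - ((ww M k r : ℝ) : ℂ) * (angM (winv M k (opL M k (winv M k (opL M k α)))) t r ϑ φ - ((6 * M / r : ℝ) : ℂ) * winv M k (opL M k (winv M k (opL M k α))) t r ϑ φ)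
  simp only [mF]
  linear_combination (-1 : ℂ) * R1 + ((6 * M / r : ℝ) : ℂ) * R2 + (-1 : ℂ) * R3
    + (6 * (M : ℂ)) * R4 + (winv M k (opL M k α) t r ϑ φ) * i5


/-- If `𝔗⁽±²⁾α̃⁽±²⁾ = F⁽±²⁾`, then the Chandrasekhar transformations
`Ψ⁽±²⁾` satisfy the inhomogeneous Regge–Wheeler equations
`𝕽⁽⁺²⁾Ψ⁽⁺²⁾ = L̲(w⁻¹L̲(w⁻¹F⁽⁺²⁾))`, `𝕽⁽⁻²⁾Ψ⁽⁻²⁾ = L(w⁻¹L(w⁻¹F⁽⁻²⁾))` on `Ω`;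
in particular if `F⁽±²⁾ = 0` on `Ω` then `𝕽⁽±²⁾Ψ⁽±²⁾ = 0` on `Ω`. -/
theorem statement3
    (M k rp : ℝ) (hM : 0 < M) (hk : 0 < k) (hrp : 0 < rp)
    (hroot : rp + k ^ 2 * rp ^ 3 - 2 * M = 0)
    (αp αm Fp Fm : F4)
    (hαp : SmoothOnOm rp αp) (hαm : SmoothOnOm rp αm)
    (hFp : SmoothOnOm rp Fp) (hFm : SmoothOnOm rp Fm)
    (hTp : ∀ t r ϑ φ : ℝ, (t, r, ϑ, φ) ∈ OmSet rp → Tp M k αp t r ϑ φ = Fp t r ϑ φ)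
    (hTm : ∀ t r ϑ φ : ℝ, (t, r, ϑ, φ) ∈ OmSet rp → Tm M k αm t r ϑ φ = Fm t r ϑ φ)
    (ψp Ψp ψm Ψm : F4)
    (hψp : ψp = winv M k (opLb M k αp))
    (hΨp : Ψp = winv M k (opLb M k ψp))
    (hψm : ψm = winv M k (opL M k αm))
    (hΨm : Ψm = winv M k (opL M k ψm)) :
    (∀ t r ϑ φ : ℝ, (t, r, ϑ, φ) ∈ OmSet rp →
      RWp M k Ψp t r ϑ φ = opLb M k (winv M k (opLb M k (winv M k Fp))) t r ϑ φ
      ∧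
      RWm M k Ψm t r ϑ φ = opL M k (winv M k (opL M k (winv M k Fm))) t r ϑ φ)
    ∧
    ((∀ t r ϑ φ : ℝ, (t, r, ϑ, φ) ∈ OmSet rp → Fp t r ϑ φ = 0 ∧ Fm t r ϑ φ = 0) →
      ∀ t r ϑ φ : ℝ, (t, r, ϑ, φ) ∈ OmSet rp →
        RWp M k Ψp t r ϑ φ = 0 ∧ RWm M k Ψm t r ϑ φ = 0) := by
  subst hψp hΨp hψm hΨm
  have hTeukp : EqOnOm rp (Tp M k αp) Fp := fun t r ϑ φ hq => hTp t r ϑ φ hq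
  have hTeukm : EqOnOm rp (Tm M k αm) Fm := fun t r ϑ φ hq => hTm t r ϑ φ hq
  have mainp : ∀ t r ϑ φ : ℝ, ((t,r,ϑ,φ) : P4) ∈ OmSet rp →
      RWp M k (winv M k (opLb M k (winv M k (opLb M k αp)))) t r ϑ φ
        = opLb M k (winv M k (opLb M k (winv M k Fp))) t r ϑ φ :=
    fun t r ϑ φ hq => (step3p hM hk hrp hroot hαp hFp hTeukp t r ϑ φ hq).symm
  have mainm : ∀ t r ϑ φ : ℝ, ((t,r,ϑ,φ) : P4) ∈ OmSet rp →
      RWm M k (winv M k (opL M k (winv M k (opL M k αm)))) t r ϑ φ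
        = opL M k (winv M k (opL M k (winv M k Fm))) t r ϑ φ :=
    fun t r ϑ φ hq => (step3m hM hk hrp hroot hαm hFm hTeukm t r ϑ φ hq).symm
  refine ⟨fun t r ϑ φ hq => ⟨mainp t r ϑ φ hq, mainm t r ϑ φ hq⟩, ?_⟩
  intro hzero t r ϑ φ hq
  have zp1 : EqOnOm rp (winv M k Fp) (fun _ _ _ _ => 0) := by
    intro t r ϑ φ hq
    show ((ww M k r : ℝ) : ℂ)⁻¹ * Fp t r ϑ φ = 0
    rw [(hzero t r ϑ φ hq).1]
    ring
  have zm1 : EqOnOm rp (winv M k Fm) (fun _ _ _ _ => 0) := by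
    intro t r ϑ φ hq
    show ((ww M k r : ℝ) : ℂ)⁻¹ * Fm t r ϑ φ = 0
    rw [(hzero t r ϑ φ hq).2]
    ring
  have zp2 : EqOnOm rp (opLb M k (winv M k Fp)) (fun _ _ _ _ => 0) := by
    intro t r ϑ φ hq
    rw [opLb_congr zp1 hq]
    show dT (fun _ _ _ _ => (0:ℂ)) t r ϑ φ
        - ((Del M k r / r ^ 2 : ℝ) : ℂ) * dR (fun _ _ _ _ => (0:ℂ)) t r ϑ φ = 0
    simp [dT, dR]
  have zm2 : EqOnOm rp (opL M k (winv M k Fm)) (fun _ _ _ _ => 0) := by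
    intro t r ϑ φ hq
    rw [opL_congr zm1 hq]
    show dT (fun _ _ _ _ => (0:ℂ)) t r ϑ φ
        + ((Del M k r / r ^ 2 : ℝ) : ℂ) * dR (fun _ _ _ _ => (0:ℂ)) t r ϑ φ = 0
    simp [dT, dR]
  have zp3 : EqOnOm rp (winv M k (opLb M k (winv M k Fp))) (fun _ _ _ _ => 0) := by
    intro t r ϑ φ hq
    show ((ww M k r : ℝ) : ℂ)⁻¹ * opLb M k (winv M k Fp) t r ϑ φ = 0
    rw [zp2 t r ϑ φ hq]
    ring
  have zm3 : EqOnOm rp (winv M k (opL M k (winv M k Fm))) (fun _ _ _ _ => 0) := by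
    intro t r ϑ φ hq
    show ((ww M k r : ℝ) : ℂ)⁻¹ * opL M k (winv M k Fm) t r ϑ φ = 0
    rw [zm2 t r ϑ φ hq]
    ring
  constructor
  · rw [mainp t r ϑ φ hq, opLb_congr zp3 hq]
    show dT (fun _ _ _ _ => (0:ℂ)) t r ϑ φ
        - ((Del M k r / r ^ 2 : ℝ) : ℂ) * dR (fun _ _ _ _ => (0:ℂ)) t r ϑ φ = 0
    simp [dT, dR]
  · rw [mainm t r ϑ φ hq, opL_congr zm3 hq]
    show dT (fun _ _ _ _ => (0:ℂ)) t r ϑ φ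
        + ((Del M k r / r ^ 2 : ℝ) : ℂ) * dR (fun _ _ _ _ => (0:ℂ)) t r ϑ φ = 0
    simp [dT, dR]

end Grav
end
end

section
/- For every smooth complex-valued function f on (0,π)×ℝ (coordinates (ϑ,φ)) the following commutation identities of the spin-lowering and spin-raising operators hold at every point: 𝓛₂†𝓛₋₁f = 𝓛₀𝓛₁†f + 2f, 𝓛₁†𝓛₀f = 𝓛₁𝓛₀†f, and 𝓛₀†𝓛₁f = 𝓛₂𝓛₋₁†f − 2f. -/
/- Spin-raising and spin-lowering operators on functions f(ϑ, φ) on (0,π) × ℝ. -/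

noncomputable section

open Filter Topology Set

namespace Ang

abbrev F2 : Type := ℝ → ℝ → ℂ

/-- `∂_ϑ`. -/
def dTh (f : F2) : F2 := fun ϑ φ => deriv (fun x => f x φ) ϑ
/-- `∂_φ`. -/
def dPh (f : F2) : F2 := fun ϑ φ => deriv (fun y => f ϑ y) φ

/-- `𝓛ₙ f = ∂_ϑ f + (i/sin ϑ)∂_φ f + n cot ϑ · f`. -/
def Lo (n : ℤ) (f : F2) : F2 := fun ϑ φ =>
  dTh f ϑ φ + Complex.I * (Real.sin ϑ : ℂ)⁻¹ * dPh f ϑ φ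
    + (n : ℂ) * ((Real.cos ϑ / Real.sin ϑ : ℝ) : ℂ) * f ϑ φ

/-- `𝓛ₙ† f = ∂_ϑ f − (i/sin ϑ)∂_φ f + n cot ϑ · f`. -/
def Ld (n : ℤ) (f : F2) : F2 := fun ϑ φ =>
  dTh f ϑ φ - Complex.I * (Real.sin ϑ : ℂ)⁻¹ * dPh f ϑ φ
    + (n : ℂ) * ((Real.cos ϑ / Real.sin ϑ : ℝ) : ℂ) * f ϑ φ

/-- `f` is smooth on `(0,π) × ℝ`. -/
def Smooth2 (f : F2) : Prop :=
  ContDiffOn ℝ (⊤ : ℕ∞) (fun p : ℝ × ℝ => f p.1 p.2)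
    (Set.Ioo 0 Real.pi ×ˢ (Set.univ : Set ℝ))

/-- Generic operator with coefficient `ε` in place of `±i`. -/
def G (ε : ℂ) (n : ℤ) (f : F2) : F2 := fun ϑ φ =>
  dTh f ϑ φ + ε * (Real.sin ϑ : ℂ)⁻¹ * dPh f ϑ φ
    + (n : ℂ) * ((Real.cos ϑ / Real.sin ϑ : ℝ) : ℂ) * f ϑ φ

lemma Lo_eq_G (n : ℤ) (f : F2) : Lo n f = G Complex.I n f := rfl

lemma Ld_eq_G (n : ℤ) (f : F2) : Ld n f = G (-Complex.I) n f := by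
  funext ϑ φ; simp only [Ld, G]; ring

lemma master (f : F2) (hf : Smooth2 f) {ϑ φ : ℝ} (hϑ : ϑ ∈ Set.Ioo 0 Real.pi) :
    ∃ c11 c12 c22 d1 d2 : ℂ, ∀ (ε δ : ℂ) (m n : ℤ),
      G ε m (G δ n f) ϑ φ =
        (c11 + δ * ((-Real.cos ϑ / (Real.sin ϑ) ^ 2 : ℝ) : ℂ) * d2
            + δ * (Real.sin ϑ : ℂ)⁻¹ * c12
            + (n : ℂ) * (((-Real.sin ϑ * Real.sin ϑ - Real.cos ϑ * Real.cos ϑ)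
                / (Real.sin ϑ) ^ 2 : ℝ) : ℂ) * f ϑ φ
            + (n : ℂ) * ((Real.cos ϑ / Real.sin ϑ : ℝ) : ℂ) * d1)
          + ε * (Real.sin ϑ : ℂ)⁻¹ *
              (c12 + δ * (Real.sin ϑ : ℂ)⁻¹ * c22
                + (n : ℂ) * ((Real.cos ϑ / Real.sin ϑ : ℝ) : ℂ) * d2)
          + (m : ℂ) * ((Real.cos ϑ / Real.sin ϑ : ℝ) : ℂ) *
              (d1 + δ * (Real.sin ϑ : ℂ)⁻¹ * d2
                + (n : ℂ) * ((Real.cos ϑ / Real.sin ϑ : ℝ) : ℂ) * f ϑ φ) := by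
  have hS : Real.sin ϑ ≠ 0 := (Real.sin_pos_of_pos_of_lt_pi hϑ.1 hϑ.2).ne'
  have hU : IsOpen (Set.Ioo (0 : ℝ) Real.pi ×ˢ (Set.univ : Set ℝ)) :=
    isOpen_Ioo.prod isOpen_univ
  set g : ℝ × ℝ → ℂ := fun p => f p.1 p.2 with hgdef
  have hg : ∀ q ∈ Set.Ioo (0 : ℝ) Real.pi ×ˢ (Set.univ : Set ℝ),
      ContDiffAt ℝ (⊤ : ℕ∞) g q := fun q hq => hf.contDiffAt (hU.mem_nhds hq)
  set A : ℝ × ℝ → (ℝ × ℝ) →L[ℝ] ℂ := fderiv ℝ g with hAdef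
  have hmem : ∀ {x y : ℝ}, x ∈ Set.Ioo (0 : ℝ) Real.pi →
      (x, y) ∈ Set.Ioo (0 : ℝ) Real.pi ×ˢ (Set.univ : Set ℝ) := fun hx => ⟨hx, trivial⟩
  -- first partials of f
  have hslice1 : ∀ {x y : ℝ}, x ∈ Set.Ioo (0 : ℝ) Real.pi →
      HasDerivAt (fun t => f t y) (A (x, y) ((1 : ℝ), (0 : ℝ))) x := by
    intro x y hx
    have hd : HasDerivAt (fun t : ℝ => (t, y)) ((1 : ℝ), (0 : ℝ)) x :=
      (hasDerivAt_id x).prodMk (hasDerivAt_const x y)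
    have h' : HasFDerivAt g (A (x, y)) (x, y) :=
      ((hg _ (hmem hx)).differentiableAt (by simp)).hasFDerivAt
    exact h'.comp_hasDerivAt x hd
  have hslice2 : ∀ {x y : ℝ}, x ∈ Set.Ioo (0 : ℝ) Real.pi →
      HasDerivAt (fun s => f x s) (A (x, y) ((0 : ℝ), (1 : ℝ))) y := by
    intro x y hx
    have hd : HasDerivAt (fun s : ℝ => (x, s)) ((0 : ℝ), (1 : ℝ)) y :=
      (hasDerivAt_const y x).prodMk (hasDerivAt_id y)
    have h' : HasFDerivAt g (A (x, y)) (x, y) :=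
      ((hg _ (hmem hx)).differentiableAt (by simp)).hasFDerivAt
    exact h'.comp_hasDerivAt y hd
  -- second derivative
  have hA' : ContDiffAt ℝ (⊤ : ℕ∞) A (ϑ, φ) :=
    (hg _ (hmem hϑ)).fderiv_right (m := (⊤ : ℕ∞)) (by rw [ENat.coe_top_add_one])
  set B : (ℝ × ℝ) →L[ℝ] (ℝ × ℝ) →L[ℝ] ℂ := fderiv ℝ A (ϑ, φ) with hBdef
  have hAB : HasFDerivAt A B (ϑ, φ) := (hA'.differentiableAt (by simp)).hasFDerivAt
  have hB1 : ∀ v : ℝ × ℝ,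
      HasDerivAt (fun x => A (x, φ) v) (B ((1 : ℝ), (0 : ℝ)) v) ϑ := by
    intro v
    have hd : HasDerivAt (fun t : ℝ => (t, φ)) ((1 : ℝ), (0 : ℝ)) ϑ :=
      (hasDerivAt_id ϑ).prodMk (hasDerivAt_const ϑ φ)
    have h1 : HasDerivAt (fun x => A (x, φ)) (B ((1 : ℝ), (0 : ℝ))) ϑ :=
      hAB.comp_hasDerivAt ϑ hd
    exact (ContinuousLinearMap.apply ℝ ℂ v).hasFDerivAt.comp_hasDerivAt ϑ h1
  have hB2 : ∀ v : ℝ × ℝ,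
      HasDerivAt (fun y => A (ϑ, y) v) (B ((0 : ℝ), (1 : ℝ)) v) φ := by
    intro v
    have hd : HasDerivAt (fun s : ℝ => (ϑ, s)) ((0 : ℝ), (1 : ℝ)) φ :=
      (hasDerivAt_const φ ϑ).prodMk (hasDerivAt_id φ)
    have h1 : HasDerivAt (fun y => A (ϑ, y)) (B ((0 : ℝ), (1 : ℝ))) φ :=
      hAB.comp_hasDerivAt φ hd
    exact (ContinuousLinearMap.apply ℝ ℂ v).hasFDerivAt.comp_hasDerivAt φ h1
  -- Schwarz symmetry
  have hsymm : B ((0 : ℝ), (1 : ℝ)) ((1 : ℝ), (0 : ℝ))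
      = B ((1 : ℝ), (0 : ℝ)) ((0 : ℝ), (1 : ℝ)) := by
    have hev : ∀ᶠ q in 𝓝 ((ϑ, φ) : ℝ × ℝ), HasFDerivAt g (A q) q := by
      filter_upwards [hU.mem_nhds (hmem hϑ)] with q hq
      exact ((hg q hq).differentiableAt (by simp)).hasFDerivAt
    exact second_derivative_symmetric_of_eventually hev hAB _ _
  refine ⟨B (1, 0) (1, 0), B (1, 0) (0, 1), B (0, 1) (0, 1),
    A (ϑ, φ) (1, 0), A (ϑ, φ) (0, 1), ?_⟩
  intro ε δ m n
  -- value of the inner operator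
  have hval : ∀ {x y : ℝ}, x ∈ Set.Ioo (0 : ℝ) Real.pi →
      G δ n f x y = A (x, y) (1, 0) + δ * (Real.sin x : ℂ)⁻¹ * A (x, y) (0, 1)
        + (n : ℂ) * ((Real.cos x / Real.sin x : ℝ) : ℂ) * f x y := by
    intro x y hx
    simp only [G, dTh, dPh, (hslice1 hx).deriv, (hslice2 hx).deriv]
  -- derivative of (sin x)⁻¹ and cot x as complex-valued functions
  have hsin : HasDerivAt (fun x : ℝ => ((Real.sin x : ℂ))⁻¹)
      ((-Real.cos ϑ / (Real.sin ϑ) ^ 2 : ℝ) : ℂ) ϑ := by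
    have h : HasDerivAt (fun x : ℝ => (Real.sin x)⁻¹)
        (-Real.cos ϑ / (Real.sin ϑ) ^ 2) ϑ := (Real.hasDerivAt_sin ϑ).inv hS
    simpa only [Complex.ofReal_inv] using h.ofReal_comp
  have hcot : HasDerivAt (fun x : ℝ => ((Real.cos x / Real.sin x : ℝ) : ℂ))
      (((-Real.sin ϑ * Real.sin ϑ - Real.cos ϑ * Real.cos ϑ) / (Real.sin ϑ) ^ 2 : ℝ) : ℂ)
      ϑ := by
    have h : HasDerivAt (fun x : ℝ => Real.cos x / Real.sin x)
        ((-Real.sin ϑ * Real.sin ϑ - Real.cos ϑ * Real.cos ϑ) / (Real.sin ϑ) ^ 2) ϑ :=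
      (Real.hasDerivAt_cos ϑ).div (Real.hasDerivAt_sin ϑ) hS
    exact h.ofReal_comp
  -- partial ϑ of the inner operator
  have h1 : dTh (G δ n f) ϑ φ =
      B (1, 0) (1, 0)
        + (δ * ((-Real.cos ϑ / (Real.sin ϑ) ^ 2 : ℝ) : ℂ) * A (ϑ, φ) (0, 1)
            + δ * (Real.sin ϑ : ℂ)⁻¹ * B (1, 0) (0, 1))
        + ((n : ℂ) * (((-Real.sin ϑ * Real.sin ϑ - Real.cos ϑ * Real.cos ϑ)
              / (Real.sin ϑ) ^ 2 : ℝ) : ℂ) * f ϑ φ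
            + (n : ℂ) * ((Real.cos ϑ / Real.sin ϑ : ℝ) : ℂ) * A (ϑ, φ) (1, 0)) := by
    have heq : (fun x => G δ n f x φ) =ᶠ[𝓝 ϑ]
        fun x => A (x, φ) (1, 0) + δ * (Real.sin x : ℂ)⁻¹ * A (x, φ) (0, 1)
          + (n : ℂ) * ((Real.cos x / Real.sin x : ℝ) : ℂ) * f x φ := by
      filter_upwards [isOpen_Ioo.mem_nhds hϑ] with x hx using hval hx
    have hder : HasDerivAt
        (fun x => A (x, φ) (1, 0) + δ * (Real.sin x : ℂ)⁻¹ * A (x, φ) (0, 1)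
          + (n : ℂ) * ((Real.cos x / Real.sin x : ℝ) : ℂ) * f x φ)
        (B (1, 0) (1, 0)
          + (δ * ((-Real.cos ϑ / (Real.sin ϑ) ^ 2 : ℝ) : ℂ) * A (ϑ, φ) (0, 1)
              + δ * (Real.sin ϑ : ℂ)⁻¹ * B (1, 0) (0, 1))
          + ((n : ℂ) * (((-Real.sin ϑ * Real.sin ϑ - Real.cos ϑ * Real.cos ϑ)
                / (Real.sin ϑ) ^ 2 : ℝ) : ℂ) * f ϑ φ
              + (n : ℂ) * ((Real.cos ϑ / Real.sin ϑ : ℝ) : ℂ) * A (ϑ, φ) (1, 0))) ϑ := by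
      exact ((hB1 (1, 0)).add ((hsin.const_mul δ).mul (hB1 (0, 1)))).add
        ((hcot.const_mul (n : ℂ)).mul (hslice1 hϑ))
    calc dTh (G δ n f) ϑ φ = deriv (fun x => G δ n f x φ) ϑ := rfl
      _ = _ := by rw [heq.deriv_eq, hder.deriv]
  -- partial φ of the inner operator
  have h2 : dPh (G δ n f) ϑ φ =
      B (1, 0) (0, 1)
        + δ * (Real.sin ϑ : ℂ)⁻¹ * B (0, 1) (0, 1)
        + (n : ℂ) * ((Real.cos ϑ / Real.sin ϑ : ℝ) : ℂ) * A (ϑ, φ) (0, 1) := by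
    have heq : (fun y => G δ n f ϑ y) =
        fun y => A (ϑ, y) (1, 0) + δ * (Real.sin ϑ : ℂ)⁻¹ * A (ϑ, y) (0, 1)
          + (n : ℂ) * ((Real.cos ϑ / Real.sin ϑ : ℝ) : ℂ) * f ϑ y :=
      funext fun y => hval hϑ
    have hder : HasDerivAt
        (fun y => A (ϑ, y) (1, 0) + δ * (Real.sin ϑ : ℂ)⁻¹ * A (ϑ, y) (0, 1)
          + (n : ℂ) * ((Real.cos ϑ / Real.sin ϑ : ℝ) : ℂ) * f ϑ y)
        (B (0, 1) (1, 0)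
          + δ * (Real.sin ϑ : ℂ)⁻¹ * B (0, 1) (0, 1)
          + (n : ℂ) * ((Real.cos ϑ / Real.sin ϑ : ℝ) : ℂ) * A (ϑ, φ) (0, 1)) φ := by
      exact ((hB2 (1, 0)).add ((hB2 (0, 1)).const_mul
          (δ * (Real.sin ϑ : ℂ)⁻¹))).add
        ((hslice2 hϑ).const_mul ((n : ℂ) * ((Real.cos ϑ / Real.sin ϑ : ℝ) : ℂ)))
    calc dPh (G δ n f) ϑ φ = deriv (fun y => G δ n f ϑ y) φ := rfl
      _ = _ := by rw [heq, hder.deriv, hsymm]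
  have h3 := hval (x := ϑ) (y := φ) hϑ
  show dTh (G δ n f) ϑ φ + ε * (Real.sin ϑ : ℂ)⁻¹ * dPh (G δ n f) ϑ φ
      + (m : ℂ) * ((Real.cos ϑ / Real.sin ϑ : ℝ) : ℂ) * G δ n f ϑ φ = _
  rw [h1, h2, h3]
  ring

/-- Commutation identities of the spin-lowering and spin-raising
operators: `𝓛₂†𝓛₋₁f = 𝓛₀𝓛₁†f + 2f`, `𝓛₁†𝓛₀f = 𝓛₁𝓛₀†f`, and
`𝓛₀†𝓛₁f = 𝓛₂𝓛₋₁†f − 2f`, at every point of `(0,π) × ℝ`. -/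
theorem statement10 (f : F2) (hf : Smooth2 f) :
    ∀ ϑ ∈ Set.Ioo (0 : ℝ) Real.pi, ∀ φ : ℝ,
      Ld 2 (Lo (-1) f) ϑ φ = Lo 0 (Ld 1 f) ϑ φ + 2 * f ϑ φ
      ∧ Ld 1 (Lo 0 f) ϑ φ = Lo 1 (Ld 0 f) ϑ φ
      ∧ Ld 0 (Lo 1 f) ϑ φ = Lo 2 (Ld (-1) f) ϑ φ - 2 * f ϑ φ := by
  intro ϑ hϑ φ
  obtain ⟨c11, c12, c22, d1, d2, hM⟩ := master f hf hϑ
  have hS : Real.sin ϑ ≠ 0 := (Real.sin_pos_of_pos_of_lt_pi hϑ.1 hϑ.2).ne'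
  have hSC : Complex.sin ϑ * (Complex.sin ϑ)⁻¹ = 1 := by
    refine mul_inv_cancel₀ ?_
    rw [← Complex.ofReal_sin]
    exact_mod_cast hS
  have e1 := hM (-Complex.I) Complex.I 2 (-1)
  have e2 := hM Complex.I (-Complex.I) 0 1
  have e3 := hM (-Complex.I) Complex.I 1 0
  have e4 := hM Complex.I (-Complex.I) 1 0
  have e5 := hM (-Complex.I) Complex.I 0 1
  have e6 := hM Complex.I (-Complex.I) 2 (-1)
  simp only [Lo_eq_G, Ld_eq_G]
  push_cast at e1 e2 e3 e4 e5 e6 ⊢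
  refine ⟨?_, ?_, ?_⟩
  · linear_combination e1 - e2
      + (2 * f ϑ φ * (Complex.sin ϑ * (Complex.sin ϑ)⁻¹ + 1)) * hSC
  · linear_combination e3 - e4
  · linear_combination e5 - e6
      - (2 * f ϑ φ * (Complex.sin ϑ * (Complex.sin ϑ)⁻¹ + 1)) * hSC

end Ang
end
end
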